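/- arXiv:1707.06373 — 6 statements merged into one kernel-verified Lean document; each statement's English description precedes it below -/
import Mathlib

section
/- For every z ∈ 𝔻, (1/(2π)) ∫₀^{2π} F₀(z e^{−iθ}) dθ = 1. -/
open MeasureTheory Complex Metric

/-- The Wirtinger derivative `∂p/∂z = (p_x - i p_y)/2` of a function `p : ℂ → ℂ`. -/
noncomputable def wderiv (p : ℂ → ℂ) (z : ℂ) : ℂ :=
  (fderiv ℝ p z 1 - Complex.I * fderiv ℝ p z Complex.I) / 2

/-- The Wirtinger derivative `∂p/∂z̄ = (p_x + i p_y)/2` of a function `p : ℂ → ℂ`. -/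
noncomputable def wderivBar (p : ℂ → ℂ) (z : ℂ) : ℂ :=
  (fderiv ℝ p z 1 + Complex.I * fderiv ℝ p z Complex.I) / 2

/-- The normalized area measure `dA = (1/π) dx dy` on the unit disk. -/
noncomputable def dA : Measure ℂ :=
  ENNReal.ofReal (1 / Real.pi) • volume.restrict (ball (0 : ℂ) 1)

/-- The biharmonic Green function of the unit disk. -/
noncomputable def Gker (z ζ : ℂ) : ℝ :=
  ‖z - ζ‖ ^ 2 * Real.log (‖(1 - (starRingEnd ℂ) ζ * z) / (z - ζ)‖ ^ 2)
    - (1 - ‖z‖ ^ 2) * (1 - ‖ζ‖ ^ 2)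

/-- The Wirtinger derivative of the biharmonic Green function in its first variable. -/
noncomputable def Gz (z ζ : ℂ) : ℂ :=
  ((starRingEnd ℂ) z - (starRingEnd ℂ) ζ) *
      ((Real.log (‖(z - ζ) / (1 - (starRingEnd ℂ) ζ * z)‖ ^ 2) : ℝ) : ℂ)
    + ((starRingEnd ℂ) z - (starRingEnd ℂ) ζ) * ((1 - ‖ζ‖ ^ 2 : ℝ) : ℂ) /
        (1 - (starRingEnd ℂ) ζ * z)
    - (starRingEnd ℂ) z * ((1 - ‖ζ‖ ^ 2 : ℝ) : ℂ)

/-- The kernel `H₀(z) = (1/2)(1-|z|²)²/|1-z|²`. -/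
noncomputable def H0 (z : ℂ) : ℝ :=
  (1 - ‖z‖ ^ 2) ^ 2 / (2 * ‖1 - z‖ ^ 2)

/-- The biharmonic Poisson kernel `F₀(z) = H₀(z) + (1/2)(1-|z|²)³/|1-z|⁴`. -/
noncomputable def F0 (z : ℂ) : ℝ :=
  H0 z + (1 - ‖z‖ ^ 2) ^ 3 / (2 * ‖1 - z‖ ^ 4)

/-- `F₀[f](z) = (1/(2π)) ∫₀^{2π} F₀(z e^{-iθ}) f(e^{iθ}) dθ`. -/
noncomputable def F0int (f : ℂ → ℂ) (z : ℂ) : ℂ :=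
  (1 / (2 * (Real.pi : ℂ))) * ∫ θ in (0:ℝ)..(2 * Real.pi),
    ((F0 (z * Complex.exp (-(θ : ℂ) * Complex.I)) : ℝ) : ℂ) * f (Complex.exp ((θ : ℂ) * Complex.I))

/-- `H₀[h](z) = (1/(2π)) ∫₀^{2π} H₀(z e^{-iθ}) h(e^{iθ}) dθ`. -/
noncomputable def H0int (h : ℂ → ℂ) (z : ℂ) : ℂ :=
  (1 / (2 * (Real.pi : ℂ))) * ∫ θ in (0:ℝ)..(2 * Real.pi),
    ((H0 (z * Complex.exp (-(θ : ℂ) * Complex.I)) : ℝ) : ℂ) * h (Complex.exp ((θ : ℂ) * Complex.I))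

/-- `G[g](z) = ∫_𝔻 G(z,ζ) g(ζ) dA(ζ)`. -/
noncomputable def Gint (g : ℂ → ℂ) (z : ℂ) : ℂ :=
  ∫ ζ, ((Gker z ζ : ℝ) : ℂ) * g ζ ∂dA

/-- The sup of `|g|` over a set `s`. -/
noncomputable def supAbsOn (g : ℂ → ℂ) (s : Set ℂ) : ℝ :=
  sSup ((fun z => ‖g z‖) '' s)

/-- The Laplacian `Δ = (1/4)(∂²/∂x² + ∂²/∂y²)`. -/
noncomputable def lap (w : ℂ → ℂ) (z : ℂ) : ℂ :=
  (fderiv ℝ (fun x => fderiv ℝ w x 1) z 1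
    + fderiv ℝ (fun x => fderiv ℝ w x Complex.I) z Complex.I) / 4

set_option maxHeartbeats 2000000

-- Auxiliary lemmas

lemma hasDerivAt_ofReal' (t : ℝ) : HasDerivAt (fun s : ℝ => (s:ℂ)) 1 t :=
  (hasDerivAt_id (t:ℂ)).comp_ofReal

lemma hasDerivAt_expNeg (t : ℝ) :
    HasDerivAt (fun s : ℝ => Complex.exp (-(s:ℂ) * Complex.I))
      (-Complex.I * Complex.exp (-(t:ℂ) * Complex.I)) t := by
  have h : HasDerivAt (fun s : ℝ => -(s:ℂ) * Complex.I) (-Complex.I) t := by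
    simpa using ((hasDerivAt_ofReal' t).neg.mul_const Complex.I)
  simpa [mul_comm] using h.cexp

lemma hasDerivAt_expPos (t : ℝ) :
    HasDerivAt (fun s : ℝ => Complex.exp ((s:ℂ) * Complex.I))
      (Complex.I * Complex.exp ((t:ℂ) * Complex.I)) t := by
  have h : HasDerivAt (fun s : ℝ => (s:ℂ) * Complex.I) (Complex.I) t := by
    simpa using ((hasDerivAt_ofReal' t).mul_const Complex.I)
  simpa [mul_comm] using h.cexp

lemma F0_alg (a b : ℂ) (h1 : a ≠ 0) (h2 : b ≠ 0) :
    (1 - (1-a)*(1-b))^2/(2*(a*b)) + (1 - (1-a)*(1-b))^3/(2*(a*b)^2)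
      = 1 + (1-a)/a + ((1-(1-a)*(1-b))/2)*((1-a)/a^2) + (1-b)/b
          + ((1-(1-a)*(1-b))/2)*((1-b)/b^2) := by
  have hA : a⁻¹^3*b⁻¹*(a^3*b) = 1 := by field_simp
  field_simp
  ring

lemma F0_key (w : ℂ) (h1 : (1:ℂ) - w ≠ 0) :
    ((F0 w : ℝ) : ℂ) =
      1 + w / (1 - w) + ((1 - w * (starRingEnd ℂ) w) / 2) * (w / (1 - w) ^ 2)
        + (starRingEnd ℂ) w / (1 - (starRingEnd ℂ) w)
        + ((1 - w * (starRingEnd ℂ) w) / 2) * ((starRingEnd ℂ) w / (1 - (starRingEnd ℂ) w) ^ 2) := by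
  have h2 : (1:ℂ) - (starRingEnd ℂ) w ≠ 0 := by
    intro h
    apply h1
    have := congrArg (starRingEnd ℂ) h
    simpa using this
  have e1 : ((‖w‖ : ℝ) : ℂ) ^ 2 = w * (starRingEnd ℂ) w := by
    rw [← Complex.ofReal_pow, Complex.sq_norm]
    exact (Complex.mul_conj w).symm
  have e2 : ((‖1 - w‖ : ℝ) : ℂ) ^ 2 = (1 - w) * (1 - (starRingEnd ℂ) w) := by
    rw [← Complex.ofReal_pow, Complex.sq_norm]
    have := (Complex.mul_conj (1 - w)).symm
    simpa using this
  have e3 : ((‖1 - w‖ : ℝ) : ℂ) ^ 4 = ((1 - w) * (1 - (starRingEnd ℂ) w)) ^ 2 := by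
    rw [show ((‖1 - w‖ : ℝ) : ℂ) ^ 4
        = (((‖1 - w‖ : ℝ) : ℂ) ^ 2) ^ 2 by ring, e2]
  unfold F0 H0
  push_cast
  rw [e1, e2, e3]
  generalize (starRingEnd ℂ) w = v at h2 ⊢
  have := F0_alg (1 - w) (1 - v) h1 h2
  simp only [sub_sub_cancel] at this
  convert this using 2

/-- For every `z ∈ 𝔻`, `(1/(2π)) ∫₀^{2π} F₀(z e^{-iθ}) dθ = 1`. -/
theorem mean_one_of_F0 (z : ℂ) (hz : z ∈ ball (0 : ℂ) 1) :
    (1 / (2 * Real.pi)) *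
      ∫ θ in (0:ℝ)..(2 * Real.pi), F0 (z * Complex.exp (-(θ : ℂ) * Complex.I)) = 1 := by
  have habs : ‖z‖ < 1 := by simpa using mem_ball_zero_iff.mp hz
  obtain ⟨u, hu⟩ : ∃ u : ℂ, u = (starRingEnd ℂ) z := ⟨_, rfl⟩
  obtain ⟨W, hW⟩ : ∃ W : ℝ → ℂ, W = fun s : ℝ => z * Complex.exp (-(s:ℂ) * Complex.I) := ⟨_, rfl⟩
  obtain ⟨V, hV⟩ : ∃ V : ℝ → ℂ, V = fun s : ℝ => u * Complex.exp ((s:ℂ) * Complex.I) := ⟨_, rfl⟩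
  have habsW : ∀ t : ℝ, ‖W t‖ = ‖z‖ := by
    intro t
    simp [hW, map_mul, Complex.norm_exp]
  have habsV : ∀ t : ℝ, ‖V t‖ = ‖z‖ := by
    intro t
    simp [hV, hu, map_mul, Complex.norm_exp]
  have hreW : ∀ t : ℝ, 0 < (1 - W t).re := by
    intro t
    have h1 : (W t).re ≤ ‖W t‖ := Complex.re_le_norm _
    rw [habsW t] at h1
    simp only [Complex.sub_re, Complex.one_re]
    linarith
  have hreV : ∀ t : ℝ, 0 < (1 - V t).re := by
    intro t
    have h1 : (V t).re ≤ ‖V t‖ := Complex.re_le_norm _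
    rw [habsV t] at h1
    simp only [Complex.sub_re, Complex.one_re]
    linarith
  have hWne : ∀ t : ℝ, (1:ℂ) - W t ≠ 0 := by
    intro t h
    have := hreW t
    rw [h] at this
    simp at this
  have hVne : ∀ t : ℝ, (1:ℂ) - V t ≠ 0 := by
    intro t h
    have := hreV t
    rw [h] at this
    simp at this
  have hconj : ∀ t : ℝ, (starRingEnd ℂ) (W t) = V t := by
    intro t
    rw [hW, hV, hu]
    simp only [map_mul]
    congr 1
    rw [← Complex.exp_conj]
    congr 1
    simp [Complex.conj_ofReal]
  have hWV : ∀ t : ℝ, W t * V t = z * u := by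
    intro t
    rw [hW, hV]
    have hee : Complex.exp (-(t:ℂ) * Complex.I) * Complex.exp ((t:ℂ) * Complex.I) = 1 := by
      rw [← Complex.exp_add]
      norm_num
    calc z * Complex.exp (-(t:ℂ) * Complex.I) * (u * Complex.exp ((t:ℂ) * Complex.I))
        = z * u * (Complex.exp (-(t:ℂ) * Complex.I) * Complex.exp ((t:ℂ) * Complex.I)) := by ring
      _ = z * u := by rw [hee, mul_one]
  obtain ⟨g, hg⟩ : ∃ g : ℝ → ℂ, g = fun t => 1 + W t / (1 - W t)
      + ((1 - z * u) / 2) * (W t / (1 - W t) ^ 2)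
      + V t / (1 - V t) + ((1 - z * u) / 2) * (V t / (1 - V t) ^ 2) := ⟨_, rfl⟩
  have key2 : ∀ t : ℝ, ((F0 (W t) : ℝ) : ℂ) = g t := by
    intro t
    rw [F0_key (W t) (hWne t), hconj t, hWV t]; simp only [hg]
  -- continuity
  have cW : Continuous W := by
    rw [hW]
    apply continuous_const.mul
    exact Complex.continuous_exp.comp (by continuity)
  have cV : Continuous V := by
    rw [hV]
    apply continuous_const.mul
    exact Complex.continuous_exp.comp (by continuity)
  have c1 : Continuous fun t => W t / (1 - W t) :=
    cW.div (continuous_const.sub cW) hWne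
  have c2 : Continuous fun t => W t / (1 - W t) ^ 2 :=
    cW.div ((continuous_const.sub cW).pow 2) (fun t => pow_ne_zero 2 (hWne t))
  have c3 : Continuous fun t => V t / (1 - V t) :=
    cV.div (continuous_const.sub cV) hVne
  have c4 : Continuous fun t => V t / (1 - V t) ^ 2 :=
    cV.div ((continuous_const.sub cV).pow 2) (fun t => pow_ne_zero 2 (hVne t))
  have cg : Continuous g := by
    rw [hg]
    exact (((continuous_const.add c1).add (continuous_const.mul c2)).add c3).add
      (continuous_const.mul c4)
  -- derivatives
  have hWd : ∀ t : ℝ, HasDerivAt W (-Complex.I * W t) t := by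
    intro t
    have h := (hasDerivAt_expNeg t).const_mul z
    rw [hW]
    refine h.congr_deriv ?_
    ring
  have hVd : ∀ t : ℝ, HasDerivAt V (Complex.I * V t) t := by
    intro t
    have h := (hasDerivAt_expPos t).const_mul u
    rw [hV]
    refine h.congr_deriv ?_
    ring
  have hdenW : ∀ t : ℝ, HasDerivAt (fun s => 1 - W s) (Complex.I * W t) t := by
    intro t
    have h := (hWd t).const_sub 1
    refine h.congr_deriv ?_
    ring
  have hdenV : ∀ t : ℝ, HasDerivAt (fun s => 1 - V s) (-(Complex.I * V t)) t := by
    intro t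
    exact (hVd t).const_sub 1
  have hslitW : ∀ t : ℝ, (1 - W t) ∈ Complex.slitPlane := fun t =>
    Complex.mem_slitPlane_iff.mpr (Or.inl (hreW t))
  have hslitV : ∀ t : ℝ, (1 - V t) ∈ Complex.slitPlane := fun t =>
    Complex.mem_slitPlane_iff.mpr (Or.inl (hreV t))
  have hPhi : ∀ t : ℝ, HasDerivAt (fun s : ℝ =>
      (s:ℂ) + (-Complex.I) * Complex.log (1 - W s)
        + ((1 - z * u) / 2 * Complex.I) * (W s / (1 - W s))
        + Complex.I * Complex.log (1 - V s)
        + (-((1 - z * u) / 2) * Complex.I) * (V s / (1 - V s))) (g t) t := by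
    intro t
    have p0 := hasDerivAt_ofReal' t
    have p1 := ((hdenW t).clog_real (hslitW t)).const_mul (-Complex.I)
    have p2 := (((hWd t).div (hdenW t) (hWne t))).const_mul ((1 - z * u) / 2 * Complex.I)
    have p3 := ((hdenV t).clog_real (hslitV t)).const_mul Complex.I
    have p4 := (((hVd t).div (hdenV t) (hVne t))).const_mul (-((1 - z * u) / 2) * Complex.I)
    have hsum := (((p0.add p1).add p2).add p3).add p4
    refine hsum.congr_deriv ?_
    symm
    simp only [hg]
    have h1 := hWne t
    have h2 := hVne t
    generalize hA : W t = a at h1 ⊢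
    generalize hB : V t = b at h2 ⊢
    linear_combination (a/(1-a) + ((1 - z*u)/2)*(a/(1-a)^2)
      + b/(1-b) + ((1-z*u)/2)*(b/(1-b)^2)) * Complex.I_mul_I
  -- the integral
  have hI : (∫ t in (0:ℝ)..(2 * Real.pi), ((F0 (W t) : ℝ) : ℂ)) = ((2 * Real.pi : ℝ) : ℂ) := by
    have hcg : Continuous fun t : ℝ => ((F0 (W t) : ℝ) : ℂ) := by
      have he : (fun t : ℝ => ((F0 (W t) : ℝ) : ℂ)) = g := funext key2
      rw [he]; exact cg
    have hftc := intervalIntegral.integral_eq_sub_of_hasDerivAt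
      (f := fun s : ℝ =>
        (s:ℂ) + (-Complex.I) * Complex.log (1 - W s)
          + ((1 - z * u) / 2 * Complex.I) * (W s / (1 - W s))
          + Complex.I * Complex.log (1 - V s)
          + (-((1 - z * u) / 2) * Complex.I) * (V s / (1 - V s)))
      (f' := fun t : ℝ => ((F0 (W t) : ℝ) : ℂ))
      (a := 0) (b := 2 * Real.pi)
      (fun t _ => by simpa only [← key2 t] using hPhi t)
      (hcg.intervalIntegrable 0 (2 * Real.pi))
    rw [hftc]
    have eP : Complex.exp (-(((2 * Real.pi : ℝ)):ℂ) * Complex.I) = 1 := by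
      push_cast
      rw [show (-(2 * (Real.pi:ℂ)) * Complex.I) = -(2 * (Real.pi:ℂ) * Complex.I) by ring,
        Complex.exp_neg, Complex.exp_two_pi_mul_I, inv_one]
    have eQ : Complex.exp ((((2 * Real.pi : ℝ)):ℂ) * Complex.I) = 1 := by
      push_cast
      exact Complex.exp_two_pi_mul_I
    have e0 : Complex.exp (-((0:ℝ):ℂ) * Complex.I) = 1 := by norm_num
    have e0' : Complex.exp (((0:ℝ):ℂ) * Complex.I) = 1 := by norm_num
    rw [hW, hV]
    simp only [eP, eQ, e0, e0']
    push_cast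
    ring
  have hI2 : (∫ t in (0:ℝ)..(2 * Real.pi), F0 (z * Complex.exp (-(t : ℂ) * Complex.I)))
      = 2 * Real.pi := by
    have hofr := intervalIntegral.integral_ofReal
      (f := fun t : ℝ => F0 (z * Complex.exp (-(t : ℂ) * Complex.I)))
      (a := 0) (b := 2 * Real.pi) (μ := volume)
    rw [hW] at hI
    rw [hofr] at hI
    exact_mod_cast hI
  rw [hI2]
  field_simp
end

section
/- For every z ∈ 𝔻, ∫_𝔻 |G(z,ζ)| dA(ζ) ≤ 3/4; in particular, for every g continuous on the closed unit disk, ∫_𝔻 |G(z,ζ) g(ζ)| dA(ζ) ≤ (3/4)‖g‖_∞. -/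
open MeasureTheory Complex Metric

lemma ident (z ζ : ℂ) : ‖1 - (starRingEnd ℂ) ζ * z‖ ^ 2 =
    ‖z - ζ‖ ^ 2 + (1 - ‖z‖ ^ 2) * (1 - ‖ζ‖ ^ 2) := by
  rw [Complex.sq_norm, Complex.sq_norm, Complex.sq_norm, Complex.sq_norm]
  simp [Complex.normSq_apply, Complex.sub_re, Complex.sub_im, Complex.mul_re, Complex.mul_im]
  ring

lemma key (z ζ : ℂ) (hz : ‖z‖ ≤ 1) (hζ : ‖ζ‖ ≤ 1) :
    |Gker z ζ| ≤ (1 - ‖z‖ ^ 2) * (1 - ‖ζ‖ ^ 2) := by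
  set a := ‖z - ζ‖ ^ 2 with ha
  set c := (1 - ‖z‖ ^ 2) * (1 - ‖ζ‖ ^ 2) with hc
  have hc0 : 0 ≤ c := by
    apply mul_nonneg <;> nlinarith [norm_nonneg z, norm_nonneg ζ]
  by_cases hzz : z = ζ
  · subst hzz
    have hG : Gker z z = -((1 - ‖z‖ ^ 2) * (1 - ‖z‖ ^ 2)) := by
      simp [Gker]
    rw [hG, abs_neg, _root_.abs_of_nonneg hc0]
  · have ha0 : 0 < a := pow_pos (norm_pos_iff.2 (sub_ne_zero.2 hzz)) 2
    have hb : ‖1 - (starRingEnd ℂ) ζ * z‖ ^ 2 = a + c := ident z ζ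
    have hlog : ‖(1 - (starRingEnd ℂ) ζ * z) / (z - ζ)‖ ^ 2 = (a + c) / a := by
      rw [norm_div, div_pow, hb]
    have hA0 : 0 ≤ a * Real.log ((a + c) / a) := by
      apply mul_nonneg ha0.le
      apply Real.log_nonneg
      rw [le_div_iff₀ ha0]; linarith
    have hAc : a * Real.log ((a + c) / a) ≤ c := by
      have h1 : Real.log ((a + c) / a) ≤ (a + c) / a - 1 :=
        Real.log_le_sub_one_of_pos (by positivity)
      have h2 : a * ((a + c) / a - 1) = c := by field_simp; ring
      nlinarith
    rw [Gker, hlog, ← ha, ← hc, abs_le]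
    constructor <;> linarith

/-- For every `z ∈ 𝔻`, `∫_𝔻 |G(z,ζ)| dA(ζ) ≤ 3/4`, and hence
`∫_𝔻 |G(z,ζ) g(ζ)| dA(ζ) ≤ (3/4)‖g‖_∞` for `g` continuous on the closed disk. -/
theorem integral_abs_Gker_le (z : ℂ) (hz : z ∈ ball (0 : ℂ) 1) :
    (∫⁻ ζ, ENNReal.ofReal |Gker z ζ| ∂dA) ≤ ENNReal.ofReal (3 / 4) ∧
    ∀ g : ℂ → ℂ, ContinuousOn g (closedBall (0 : ℂ) 1) →
      (∫⁻ ζ, ENNReal.ofReal (‖((Gker z ζ : ℝ) : ℂ) * g ζ‖) ∂dA) ≤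
        ENNReal.ofReal ((3 / 4) * supAbsOn g (ball (0 : ℂ) 1)) := by
  have hz1 : ‖z‖ ≤ 1 := by
    have := mem_ball_zero_iff.1 hz
    exact this.le
  set r : ℝ := Real.sqrt (1 / 2) with hr
  have hr0 : 0 ≤ r := Real.sqrt_nonneg _
  have hrsq : r ^ 2 = 1 / 2 := Real.sq_sqrt (by norm_num)
  have hr1 : r ≤ 1 := by nlinarith
  -- pointwise bound
  have hpt : ∀ ζ ∈ ball (0 : ℂ) 1, ENNReal.ofReal |Gker z ζ| ≤
      ENNReal.ofReal (1 / 2) +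
        (ball (0 : ℂ) r).indicator (fun _ => ENNReal.ofReal (1 / 2)) ζ := by
    intro ζ hζ
    have hζ1 : ‖ζ‖ ≤ 1 := by
      have := mem_ball_zero_iff.1 hζ
      exact this.le
    have hk : |Gker z ζ| ≤ 1 - ‖ζ‖ ^ 2 := by
      have h1 := key z ζ hz1 hζ1
      have h2 : 0 ≤ ‖z‖ ^ 2 * (1 - ‖ζ‖ ^ 2) :=
        mul_nonneg (sq_nonneg _) (by nlinarith [norm_nonneg ζ])
      nlinarith [h1, h2]
    by_cases hm : ζ ∈ ball (0 : ℂ) r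
    · rw [Set.indicator_of_mem hm, ← ENNReal.ofReal_add (by norm_num) (by norm_num)]
      apply ENNReal.ofReal_le_ofReal
      nlinarith [norm_nonneg ζ, sq_nonneg (‖ζ‖)]
    · rw [Set.indicator_of_notMem hm, add_zero]
      apply ENNReal.ofReal_le_ofReal
      have hrζ : r ≤ ‖ζ‖ := by
        have := mem_ball_zero_iff.not.1 hm
        linarith [not_lt.1 this]
      nlinarith
  have hmain : (∫⁻ ζ, ENNReal.ofReal |Gker z ζ| ∂dA) ≤ ENNReal.ofReal (3 / 4) := by
    rw [dA, lintegral_smul_measure]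
    have h1 : (∫⁻ ζ, ENNReal.ofReal |Gker z ζ| ∂(volume.restrict (ball (0 : ℂ) 1))) ≤
        ∫⁻ ζ, (ENNReal.ofReal (1 / 2) +
          (ball (0 : ℂ) r).indicator (fun _ => ENNReal.ofReal (1 / 2)) ζ)
            ∂(volume.restrict (ball (0 : ℂ) 1)) :=
      lintegral_mono_ae ((ae_restrict_iff' measurableSet_ball).2 (ae_of_all _ hpt))
    have h2 : (∫⁻ ζ, (ENNReal.ofReal (1 / 2) +
          (ball (0 : ℂ) r).indicator (fun _ => ENNReal.ofReal (1 / 2)) ζ)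
            ∂(volume.restrict (ball (0 : ℂ) 1)))
        = ENNReal.ofReal (1 / 2) * ENNReal.ofReal Real.pi
          + ENNReal.ofReal (1 / 2) * ENNReal.ofReal (r ^ 2 * Real.pi) := by
      rw [lintegral_add_left measurable_const, lintegral_const,
        lintegral_indicator_const measurableSet_ball,
        Measure.restrict_apply_univ, Measure.restrict_apply measurableSet_ball,
        Set.inter_eq_self_of_subset_left (ball_subset_ball hr1),
        Complex.volume_ball, Complex.volume_ball]
      rw [← ENNReal.ofReal_pow hr0, ← ENNReal.ofReal_coe_nnreal, NNReal.coe_real_pi,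
        ← ENNReal.ofReal_mul (by positivity)]
      norm_num
    calc ENNReal.ofReal (1 / Real.pi) *
          ∫⁻ ζ, ENNReal.ofReal |Gker z ζ| ∂(volume.restrict (ball (0 : ℂ) 1))
        ≤ ENNReal.ofReal (1 / Real.pi) *
          (ENNReal.ofReal (1 / 2) * ENNReal.ofReal Real.pi
            + ENNReal.ofReal (1 / 2) * ENNReal.ofReal (r ^ 2 * Real.pi)) := by
          rw [← h2]; exact mul_le_mul_right h1 _
      _ = ENNReal.ofReal ((1 / Real.pi) * ((1 / 2) * Real.pi + (1 / 2) * (r ^ 2 * Real.pi))) := by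
          rw [← ENNReal.ofReal_mul (by norm_num), ← ENNReal.ofReal_mul (by norm_num),
            ← ENNReal.ofReal_add (by positivity) (by positivity),
            ← ENNReal.ofReal_mul (by positivity)]
      _ ≤ ENNReal.ofReal (3 / 4) := by
          apply ENNReal.ofReal_le_ofReal
          rw [hrsq]
          rw [show (1 / Real.pi) * (1 / 2 * Real.pi + 1 / 2 * (1 / 2 * Real.pi))
              = (Real.pi * Real.pi⁻¹) * (3 / 4) by ring,
            mul_inv_cancel₀ Real.pi_ne_zero, one_mul]
  refine ⟨hmain, fun g hg => ?_⟩
  set M := supAbsOn g (ball (0 : ℂ) 1) with hM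
  have hbdd : BddAbove ((fun w => ‖g w‖) '' closedBall (0 : ℂ) 1) :=
    (isCompact_closedBall 0 1).bddAbove_image (continuous_norm.comp_continuousOn hg)
  have hbdd' : BddAbove ((fun w => ‖g w‖) '' ball (0 : ℂ) 1) :=
    hbdd.mono (Set.image_mono ball_subset_closedBall)
  have hMb : ∀ ζ ∈ ball (0 : ℂ) 1, ‖g ζ‖ ≤ M :=
    fun ζ hζ => le_csSup hbdd' ⟨ζ, hζ, rfl⟩
  have hM0 : 0 ≤ M := le_trans (norm_nonneg (g 0)) (hMb 0 (mem_ball_self one_pos))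
  have hae : ∀ᵐ ζ ∂dA, ENNReal.ofReal (‖((Gker z ζ : ℝ) : ℂ) * g ζ‖) ≤
      ENNReal.ofReal M * ENNReal.ofReal |Gker z ζ| := by
    rw [dA]
    refine Measure.ae_smul_measure ((ae_restrict_iff' measurableSet_ball).2
      (ae_of_all _ fun ζ hζ => ?_)) _
    rw [norm_mul, Complex.norm_real, Real.norm_eq_abs, ENNReal.ofReal_mul (abs_nonneg _), mul_comm]
    exact mul_le_mul_left (ENNReal.ofReal_le_ofReal (hMb ζ hζ)) _
  calc (∫⁻ ζ, ENNReal.ofReal (‖((Gker z ζ : ℝ) : ℂ) * g ζ‖) ∂dA)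
      ≤ ∫⁻ ζ, ENNReal.ofReal M * ENNReal.ofReal |Gker z ζ| ∂dA := lintegral_mono_ae hae
    _ = ENNReal.ofReal M * ∫⁻ ζ, ENNReal.ofReal |Gker z ζ| ∂dA :=
        lintegral_const_mul' _ _ ENNReal.ofReal_ne_top
    _ ≤ ENNReal.ofReal M * ENNReal.ofReal (3 / 4) := mul_le_mul_right hmain _
    _ = ENNReal.ofReal (3 / 4 * M) := by
        rw [← ENNReal.ofReal_mul hM0, mul_comm]
end

section
/- Let g be continuous on the closed unit disk and let w = G[g]. Then for all z₁, z₂ ∈ 𝔻, |w(z₁) − w(z₂)| ≤ (23/3)‖g‖_∞ |z₁ − z₂|; that is, w is Lipschitz continuous in 𝔻 with constant (23/3)‖g‖_∞. -/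
open MeasureTheory Complex Metric

noncomputable def reMul (W : ℂ) : ℂ →L[ℝ] ℝ :=
  Complex.reCLM.comp (W • (ContinuousLinearMap.id ℝ ℂ))

@[simp] lemma reMul_apply (W v : ℂ) : reMul W v = (W * v).re := rfl

lemma reMul_norm_le (W : ℂ) : ‖reMul W‖ ≤ ‖W‖ := by
  refine ContinuousLinearMap.opNorm_le_bound _ (norm_nonneg W) fun v => ?_
  simp only [reMul_apply, Real.norm_eq_abs]
  calc |(W * v).re| ≤ ‖W * v‖ := Complex.abs_re_le_norm _
  _ = ‖W‖ * ‖v‖ := norm_mul _ _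
  _ = ‖W‖ * ‖v‖ := rfl

lemma reMul_add (W₁ W₂ : ℂ) : reMul (W₁ + W₂) = reMul W₁ + reMul W₂ := by
  ext v; simp [add_mul]

lemma reMul_smul (r : ℝ) (W : ℂ) : r • reMul W = reMul (r * W) := by
  ext v
  simp only [ContinuousLinearMap.coe_smul', Pi.smul_apply, reMul_apply, smul_eq_mul,
    Complex.mul_re, Complex.ofReal_mul]
  ring_nf
  simp [Complex.mul_re]
  ring

-- base derivative of normSq
lemma hasFDerivAt_normSq (x : ℂ) :
    HasFDerivAt Complex.normSq (reMul (2 * (starRingEnd ℂ) x)) x := by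
  have hre : HasFDerivAt (fun w : ℂ => w.re) (Complex.reCLM : ℂ →L[ℝ] ℝ) x :=
    Complex.reCLM.hasFDerivAt
  have him : HasFDerivAt (fun w : ℂ => w.im) (Complex.imCLM : ℂ →L[ℝ] ℝ) x :=
    Complex.imCLM.hasFDerivAt
  have h := (hre.mul hre).add (him.mul him)
  have heq : (fun w : ℂ => w.re * w.re + w.im * w.im) = Complex.normSq := by
    funext w; simp [Complex.normSq_apply]
  change HasFDerivAt (fun w : ℂ => w.re * w.re + w.im * w.im) _ x at h
  rw [heq] at h
  refine h.congr_fderiv ?_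
  ext v
  simp [Complex.mul_re, Complex.conj_re, Complex.conj_im]
  ring

lemma hasFDerivAt_normSq_affine (p q z : ℂ) :
    HasFDerivAt (fun w => Complex.normSq (p - q * w))
      (reMul (-2 * q * (starRingEnd ℂ) (p - q * z))) z := by
  have hA : HasFDerivAt (fun w : ℂ => p - q * w)
      (-(q • (ContinuousLinearMap.id ℝ ℂ))) z := by
    have := ((hasFDerivAt_const p z).sub
      (((ContinuousLinearMap.id ℝ ℂ).hasFDerivAt (x := z)).const_mul q))
    rw [zero_sub] at this; exact this
  have h := (hasFDerivAt_normSq (p - q * z)).comp z hA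
  refine h.congr_fderiv ?_
  ext v
  simp [Complex.mul_re, Complex.conj_re, Complex.conj_im]
  ring

noncomputable def Kfun (ζ : ℂ) (w : ℂ) : ℝ :=
  Complex.normSq (w - ζ) *
    (Real.log (Complex.normSq (1 - (starRingEnd ℂ) ζ * w)) - Real.log (Complex.normSq (w - ζ)))
  - (1 - Complex.normSq w) * (1 - Complex.normSq ζ)

noncomputable def Wker (z ζ : ℂ) : ℂ :=
  ((Real.log (Complex.normSq (1 - (starRingEnd ℂ) ζ * z))
      - Real.log (Complex.normSq (z - ζ)) : ℝ) : ℂ) * (2 * (starRingEnd ℂ) (z - ζ))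
  + ((Complex.normSq (z - ζ) : ℝ) : ℂ) *
      (((Complex.normSq (1 - (starRingEnd ℂ) ζ * z))⁻¹ : ℝ) *
          (-2 * (starRingEnd ℂ) ζ * (starRingEnd ℂ) (1 - (starRingEnd ℂ) ζ * z))
        - ((Complex.normSq (z - ζ))⁻¹ : ℝ) * (2 * (starRingEnd ℂ) (z - ζ)))
  + ((1 - Complex.normSq ζ : ℝ) : ℂ) * (2 * (starRingEnd ℂ) z)

lemma hasFDerivAt_Kfun (ζ z : ℂ) (hD : z ≠ ζ) (hN : 1 - (starRingEnd ℂ) ζ * z ≠ 0) :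
    HasFDerivAt (Kfun ζ) (reMul (Wker z ζ)) z := by
  have ha0 : Complex.normSq (z - ζ) ≠ 0 := by
    simpa [Complex.normSq_eq_zero, sub_eq_zero] using hD
  have hb0 : Complex.normSq (1 - (starRingEnd ℂ) ζ * z) ≠ 0 := by
    simpa [Complex.normSq_eq_zero] using hN
  have h_a : HasFDerivAt (fun w => Complex.normSq (w - ζ))
      (reMul (2 * (starRingEnd ℂ) (z - ζ))) z := by
    have h := hasFDerivAt_normSq_affine (-ζ) (-1) z
    simp only [neg_one_mul, sub_neg_eq_add, neg_add_eq_sub] at h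
    convert h using 2
    ring
  have h_b : HasFDerivAt (fun w => Complex.normSq (1 - (starRingEnd ℂ) ζ * w))
      (reMul (-2 * (starRingEnd ℂ) ζ * (starRingEnd ℂ) (1 - (starRingEnd ℂ) ζ * z))) z :=
    hasFDerivAt_normSq_affine 1 ((starRingEnd ℂ) ζ) z
  have h_z : HasFDerivAt (fun w : ℂ => Complex.normSq w) (reMul (2 * (starRingEnd ℂ) z)) z :=
    hasFDerivAt_normSq z
  have hlogb := h_b.log hb0
  have hloga := h_a.log ha0
  have hprod := h_a.mul (hlogb.sub hloga)
  have hsecond := ((hasFDerivAt_const (1:ℝ) z).sub h_z).mul_const (1 - Complex.normSq ζ)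
  have htot := hprod.sub hsecond
  refine htot.congr_fderiv ?_
  ext v
  simp only [Wker, reMul_apply, ContinuousLinearMap.coe_sub', ContinuousLinearMap.coe_add',
    ContinuousLinearMap.coe_smul', Pi.sub_apply, Pi.add_apply, Pi.smul_apply, smul_eq_mul,
    ContinuousLinearMap.zero_apply, Complex.add_re, Complex.mul_re, Complex.ofReal_re,
    Complex.ofReal_im, Complex.sub_re, Complex.sub_im, Complex.mul_im, Complex.conj_re,
    Complex.conj_im, Complex.one_re, Complex.one_im, Complex.neg_re, Complex.neg_im,
    Complex.add_im, Complex.re_ofNat, Complex.im_ofNat]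
  ring

lemma Nne (z ζ : ℂ) (hz : ‖z‖ < 1) (hζ : ‖ζ‖ < 1) :
    1 - (starRingEnd ℂ) ζ * z ≠ 0 := by
  intro h
  have h1 : (starRingEnd ℂ) ζ * z = 1 := by linear_combination -h
  have := congrArg (‖·‖) h1
  rw [norm_mul, Complex.norm_conj, norm_one] at this
  nlinarith [norm_nonneg z, norm_nonneg ζ]

lemma normSq_identity (z ζ : ℂ) :
    Complex.normSq (1 - (starRingEnd ℂ) ζ * z) - Complex.normSq (z - ζ)
      = (1 - Complex.normSq z) * (1 - Complex.normSq ζ) := by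
  simp only [Complex.normSq_apply, Complex.sub_re, Complex.sub_im, Complex.mul_re,
    Complex.mul_im, Complex.one_re, Complex.one_im, Complex.conj_re, Complex.conj_im]
  ring

lemma Gker_eq_Kfun (z ζ : ℂ) (hz : ‖z‖ < 1) (hζ : ‖ζ‖ < 1) (hne : z ≠ ζ) :
    Gker z ζ = Kfun ζ z := by
  have hD : z - ζ ≠ 0 := sub_ne_zero.mpr hne
  have hN := Nne z ζ hz hζ
  have ha0 : Complex.normSq (z - ζ) ≠ 0 := by simpa [Complex.normSq_eq_zero] using hD
  have hb0 : Complex.normSq (1 - (starRingEnd ℂ) ζ * z) ≠ 0 := by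
    simpa [Complex.normSq_eq_zero] using hN
  unfold Gker Kfun
  rw [Complex.sq_norm, Complex.sq_norm, Complex.sq_norm, Complex.sq_norm, Complex.normSq_div,
    Real.log_div hb0 ha0]


lemma Wker_abs_le (z ζ : ℂ) (hz : ‖z‖ < 1) (hζ : ‖ζ‖ < 1) (hne : z ≠ ζ) :
    ‖Wker z ζ‖ ≤ 7 := by
  have hD : z - ζ ≠ 0 := sub_ne_zero.mpr hne
  have hN := Nne z ζ hz hζ
  set D : ℂ := z - ζ with hDdef
  set N : ℂ := 1 - (starRingEnd ℂ) ζ * z with hNdef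
  have hDc : (starRingEnd ℂ) D ≠ 0 := by simpa using hD
  have hNc : (starRingEnd ℂ) N ≠ 0 := by simpa using hN
  set a : ℝ := ‖D‖ with hadef
  set b : ℝ := ‖N‖ with hbdef
  have ha : 0 < a := norm_pos_iff.mpr hD
  have hb : 0 < b := norm_pos_iff.mpr hN
  -- a ≤ b
  have hzz : Complex.normSq z < 1 := by
    rw [← Complex.sq_norm]; nlinarith [norm_nonneg z]
  have hzζ : Complex.normSq ζ < 1 := by
    rw [← Complex.sq_norm]; nlinarith [norm_nonneg ζ]
  have hζ0 : 0 ≤ Complex.normSq ζ := Complex.normSq_nonneg ζ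
  have hab : a ≤ b := by
    have h1 := normSq_identity z ζ
    have h2 : Complex.normSq D ≤ Complex.normSq N := by nlinarith [Complex.normSq_nonneg z]
    rw [hadef, hbdef, Complex.norm_def, Complex.norm_def]
    exact Real.sqrt_le_sqrt h2
  have hb2 : b ≤ 2 := by
    have h1 : ‖(starRingEnd ℂ) ζ * z‖ ≤ 1 := by
      rw [norm_mul, Complex.norm_conj]
      nlinarith [norm_nonneg z, norm_nonneg ζ]
    calc b = ‖1 + -((starRingEnd ℂ) ζ * z)‖ := by rw [hbdef]; ring_nf; rfl
    _ ≤ ‖(1:ℂ)‖ + ‖-((starRingEnd ℂ) ζ * z)‖ := norm_add_le _ _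
    _ ≤ 1 + 1 := by rw [norm_one, norm_neg]; linarith
    _ = 2 := by norm_num
  -- the three terms
  have hT2 : ((Complex.normSq D : ℝ) : ℂ) *
      (((Complex.normSq N)⁻¹ : ℝ) * (-2 * (starRingEnd ℂ) ζ * (starRingEnd ℂ) N)
        - ((Complex.normSq D)⁻¹ : ℝ) * (2 * (starRingEnd ℂ) D))
      = -2 * (starRingEnd ℂ) D * ((1 - Complex.normSq ζ : ℝ) : ℂ) / N := by
    have hDD : ((Complex.normSq D : ℝ) : ℂ) = D * (starRingEnd ℂ) D := (Complex.mul_conj D).symm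
    have hNN : ((Complex.normSq N : ℝ) : ℂ) = N * (starRingEnd ℂ) N := (Complex.mul_conj N).symm
    have hζζ : ((Complex.normSq ζ : ℝ) : ℂ) = ζ * (starRingEnd ℂ) ζ := (Complex.mul_conj ζ).symm
    push_cast [hDD, hNN, hζζ]
    field_simp
    simp only [hDdef, hNdef, map_sub, map_one, map_mul, Complex.conj_conj]
    ring
  -- log bound : Lg ≥ 0 and a * Lg ≤ 2 * b / e
  set Lg : ℝ := Real.log (Complex.normSq N) - Real.log (Complex.normSq D) with hLgdef
  have hLg_eq : Lg = 2 * Real.log (b / a) := by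
    rw [hLgdef, ← Complex.sq_norm, ← Complex.sq_norm, ← hadef, ← hbdef, Real.log_pow,
      Real.log_pow, Real.log_div (ne_of_gt hb) (ne_of_gt ha)]
    push_cast; ring
  have he : (2.7 : ℝ) < Real.exp 1 := by
    have := Real.exp_one_gt_d9; norm_num at this ⊢; linarith
  have hepos : (0:ℝ) < Real.exp 1 := by linarith
  have hlog_le : Real.log (b / a) ≤ b / (a * Real.exp 1) := by
    have hba : 0 < b / (a * Real.exp 1) := by positivity
    have h1 := Real.log_le_sub_one_of_pos hba
    have h2 : Real.log (b / a) = Real.log (b / (a * Real.exp 1)) + 1 := by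
      have h3 : b / a = (b / (a * Real.exp 1)) * Real.exp 1 := by field_simp
      rw [h3, Real.log_mul (ne_of_gt hba) (ne_of_gt hepos), Real.log_exp]
    linarith
  have haLg : a * Lg ≤ 2 * b / Real.exp 1 := by
    rw [hLg_eq]
    have := mul_le_mul_of_nonneg_left hlog_le (le_of_lt ha)
    have h3 : a * (b / (a * Real.exp 1)) = b / Real.exp 1 := by field_simp
    rw [h3] at this
    calc a * (2 * Real.log (b / a)) = 2 * (a * Real.log (b / a)) := by ring
    _ ≤ 2 * (b / Real.exp 1) := by linarith
    _ = 2 * b / Real.exp 1 := by ring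
  have hLg_nonneg : 0 ≤ Lg := by
    rw [hLg_eq]
    have : (1:ℝ) ≤ b / a := (one_le_div ha).mpr hab
    have := Real.log_nonneg this
    linarith
  -- assemble
  have habs1 : ‖((Lg : ℝ) * (2 * (starRingEnd ℂ) D) : ℂ)‖ ≤ 3 := by
    rw [norm_mul, norm_mul, Complex.norm_conj, Complex.norm_real, Real.norm_eq_abs, ← hadef]
    have : |Lg| = Lg := abs_of_nonneg hLg_nonneg
    rw [this]
    have h2 : ‖(2:ℂ)‖ = 2 := by norm_num
    rw [h2]
    -- Lg * (2 * a) = 2 * (a * Lg) ≤ 2 * (2*b/e) = 4b/e ≤ 8/e ≤ 3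
    have h4 : Lg * (2 * a) = 2 * (a * Lg) := by ring
    rw [h4]
    have h5 : 2 * (a * Lg) ≤ 2 * (2 * b / Real.exp 1) := by linarith
    have h6 : 2 * (2 * b / Real.exp 1) ≤ 3 := by
      have h7 : 2 * (2 * b / Real.exp 1) = (4 * b) / Real.exp 1 := by ring
      rw [h7, div_le_iff₀ hepos]
      nlinarith
    exact h5.trans h6
  have habs2 : ‖-2 * (starRingEnd ℂ) D * ((1 - Complex.normSq ζ : ℝ) : ℂ) / N‖ ≤ 2 := by
    rw [norm_div, norm_mul, norm_mul, Complex.norm_conj, Complex.norm_real, Real.norm_eq_abs, ← hadef, ← hbdef]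
    have h1 : ‖(-2:ℂ)‖ = 2 := by norm_num
    rw [h1, _root_.abs_of_nonneg (by linarith : (0:ℝ) ≤ 1 - Complex.normSq ζ)]
    rw [div_le_iff₀ hb]
    nlinarith
  have habs3 : ‖((1 - Complex.normSq ζ : ℝ) : ℂ) * (2 * (starRingEnd ℂ) z)‖ ≤ 2 := by
    rw [norm_mul, norm_mul, Complex.norm_conj, Complex.norm_real, Real.norm_eq_abs,
      _root_.abs_of_nonneg (by linarith : (0:ℝ) ≤ 1 - Complex.normSq ζ)]
    have h1 : ‖(2:ℂ)‖ = 2 := by norm_num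
    rw [h1]
    nlinarith [norm_nonneg z]
  have hW : Wker z ζ
      = ((Lg : ℝ) : ℂ) * (2 * (starRingEnd ℂ) D)
        + (-2 * (starRingEnd ℂ) D * ((1 - Complex.normSq ζ : ℝ) : ℂ) / N)
        + ((1 - Complex.normSq ζ : ℝ) : ℂ) * (2 * (starRingEnd ℂ) z) := by
    rw [Wker, ← hT2]
  rw [hW]
  calc ‖_‖ ≤ ‖((Lg : ℝ) : ℂ) * (2 * (starRingEnd ℂ) D)
        + (-2 * (starRingEnd ℂ) D * ((1 - Complex.normSq ζ : ℝ) : ℂ) / N)‖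
      + ‖((1 - Complex.normSq ζ : ℝ) : ℂ) * (2 * (starRingEnd ℂ) z)‖ :=
      norm_add_le _ _
  _ ≤ (‖((Lg : ℝ) : ℂ) * (2 * (starRingEnd ℂ) D)‖
      + ‖-2 * (starRingEnd ℂ) D * ((1 - Complex.normSq ζ : ℝ) : ℂ) / N‖) + 2 :=
      add_le_add (norm_add_le _ _) habs3
  _ ≤ (3 + 2) + 2 := by
      have := add_le_add habs1 habs2
      linarith
  _ = 7 := by norm_num



lemma volume_segment_eq_zero (z₁ z₂ : ℂ) : volume (segment ℝ z₁ z₂) = 0 := by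
  refine measure_mono_null ?_ (Measure.addHaar_affineSubspace volume (affineSpan ℝ {z₁, z₂}) ?_)
  · rw [← convexHull_pair]
    exact convexHull_subset_affineSpan _
  · intro h
    have h2 : vectorSpan ℝ ({z₁, z₂} : Set ℂ) = ⊤ := by
      rw [← direction_affineSpan, h, AffineSubspace.direction_top]
    have h3 : Module.finrank ℝ (vectorSpan ℝ ({z₁, z₂} : Set ℂ)) ≤ 1 := by
      rw [vectorSpan_pair]
      simpa using finrank_span_le_card ({z₁ -ᵥ z₂} : Set ℂ)
    rw [h2, finrank_top] at h3
    rw [finrank_real_complex] at h3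
    omega

lemma mul_log_div_le {a b : ℝ} (ha : 0 < a) (hb : 0 < b) :
    a * Real.log (b / a) ≤ b / Real.exp 1 := by
  have hepos : (0:ℝ) < Real.exp 1 := Real.exp_pos 1
  have hba : 0 < b / (a * Real.exp 1) := by positivity
  have h1 := Real.log_le_sub_one_of_pos hba
  have h2 : Real.log (b / a) = Real.log (b / (a * Real.exp 1)) + 1 := by
    have h3 : b / a = (b / (a * Real.exp 1)) * Real.exp 1 := by field_simp
    rw [h3, Real.log_mul (ne_of_gt hba) (ne_of_gt hepos), Real.log_exp]
  have h4 : a * Real.log (b / a) ≤ a * (b / (a * Real.exp 1)) := by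
    rw [h2]
    apply mul_le_mul_of_nonneg_left _ (le_of_lt ha)
    linarith
  have h5 : a * (b / (a * Real.exp 1)) = b / Real.exp 1 := by field_simp
  linarith

lemma Gker_lip (ζ z₁ z₂ : ℂ) (hz₁ : z₁ ∈ ball (0:ℂ) 1) (hz₂ : z₂ ∈ ball (0:ℂ) 1)
    (hζb : ‖ζ‖ < 1) (hζ : ζ ∉ segment ℝ z₁ z₂) :
    |Gker z₁ ζ - Gker z₂ ζ| ≤ 7 * ‖z₁ - z₂‖ := by
  have hseg : ∀ x ∈ segment ℝ z₁ z₂, ‖x‖ < 1 := by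
    intro x hx
    have := (convex_ball (0:ℂ) 1).segment_subset hz₁ hz₂ hx
    simpa using mem_ball_zero_iff.mp this
  have hne : ∀ x ∈ segment ℝ z₁ z₂, x ≠ ζ := by
    intro x hx h
    exact hζ (h ▸ hx)
  have hmvt := Convex.norm_image_sub_le_of_norm_hasFDerivWithin_le
    (f := Kfun ζ) (f' := fun x => reMul (Wker x ζ)) (C := 7) (s := segment ℝ z₁ z₂)
    (fun x hx => (hasFDerivAt_Kfun ζ x (hne x hx) (Nne x ζ (hseg x hx) hζb)).hasFDerivWithinAt)
    (fun x hx => (reMul_norm_le _).trans (Wker_abs_le x ζ (hseg x hx) hζb (hne x hx)))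
    (convex_segment z₁ z₂) (right_mem_segment ℝ z₁ z₂) (left_mem_segment ℝ z₁ z₂)
  rw [Gker_eq_Kfun z₁ ζ (by simpa [mem_ball_zero_iff] using hz₁) hζb
      (hne z₁ (left_mem_segment ℝ z₁ z₂)),
    Gker_eq_Kfun z₂ ζ (by simpa [mem_ball_zero_iff] using hz₂) hζb
      (hne z₂ (right_mem_segment ℝ z₁ z₂))]
  calc |Kfun ζ z₁ - Kfun ζ z₂| = ‖Kfun ζ z₁ - Kfun ζ z₂‖ := rfl
  _ ≤ 7 * ‖z₁ - z₂‖ := hmvt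
  _ = 7 * ‖z₁ - z₂‖ := rfl

lemma Gker_abs_le (z ζ : ℂ) (hz : ‖z‖ < 1) (hζ : ‖ζ‖ < 1) (hne : z ≠ ζ) :
    |Gker z ζ| ≤ 4 := by
  rw [Gker_eq_Kfun z ζ hz hζ hne]
  have hD : z - ζ ≠ 0 := sub_ne_zero.mpr hne
  have hN := Nne z ζ hz hζ
  have hs : 0 < Complex.normSq (z - ζ) := Complex.normSq_pos.mpr hD
  have ht : 0 < Complex.normSq (1 - (starRingEnd ℂ) ζ * z) := Complex.normSq_pos.mpr hN
  have hzz : Complex.normSq z < 1 := by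
    rw [← Complex.sq_norm]; nlinarith [norm_nonneg z]
  have hzζ : Complex.normSq ζ < 1 := by
    rw [← Complex.sq_norm]; nlinarith [norm_nonneg ζ]
  have hst : Complex.normSq (z - ζ) ≤ Complex.normSq (1 - (starRingEnd ℂ) ζ * z) := by
    have := normSq_identity z ζ
    nlinarith [Complex.normSq_nonneg z, Complex.normSq_nonneg ζ]
  have ht4 : Complex.normSq (1 - (starRingEnd ℂ) ζ * z) ≤ 4 := by
    have h1 : ‖1 - (starRingEnd ℂ) ζ * z‖ ≤ 2 := by
      calc ‖1 - (starRingEnd ℂ) ζ * z‖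
          = ‖1 + -((starRingEnd ℂ) ζ * z)‖ := by ring_nf
      _ ≤ ‖(1:ℂ)‖ + ‖-((starRingEnd ℂ) ζ * z)‖ := norm_add_le _ _
      _ ≤ 1 + 1 := by
          rw [norm_one, norm_neg, norm_mul, Complex.norm_conj]
          nlinarith [norm_nonneg z, norm_nonneg ζ]
      _ = 2 := by norm_num
    rw [← Complex.sq_norm]
    nlinarith [norm_nonneg (1 - (starRingEnd ℂ) ζ * z)]
  set s := Complex.normSq (z - ζ)
  set t := Complex.normSq (1 - (starRingEnd ℂ) ζ * z)
  have hlog : Real.log t - Real.log s = Real.log (t / s) :=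
    (Real.log_div (ne_of_gt ht) (ne_of_gt hs)).symm
  have h1 : s * (Real.log t - Real.log s) ≤ 3 / 2 := by
    rw [hlog]
    have := mul_log_div_le hs ht
    have he : (8:ℝ)/3 ≤ Real.exp 1 := by
      have := Real.exp_one_gt_d9; norm_num at this ⊢; linarith
    have h2 : t / Real.exp 1 ≤ 3 / 2 := by
      rw [div_le_iff₀ (Real.exp_pos 1)]
      nlinarith
    linarith
  have h2 : 0 ≤ s * (Real.log t - Real.log s) := by
    rw [hlog]
    have : (1:ℝ) ≤ t / s := (one_le_div hs).mpr hst
    exact mul_nonneg (le_of_lt hs) (Real.log_nonneg this)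
  have h3 : 0 ≤ (1 - Complex.normSq z) * (1 - Complex.normSq ζ) := by
    nlinarith [Complex.normSq_nonneg z, Complex.normSq_nonneg ζ]
  have h4 : (1 - Complex.normSq z) * (1 - Complex.normSq ζ) ≤ 1 := by
    nlinarith [Complex.normSq_nonneg z, Complex.normSq_nonneg ζ]
  rw [Kfun, abs_le]
  constructor <;> linarith

/-- For `g` continuous on the closed unit disk, `w = G[g]` is Lipschitz on `𝔻`
with constant `(23/3)‖g‖_∞`. -/
theorem lipschitz_Gint (g : ℂ → ℂ) (hg : ContinuousOn g (closedBall (0 : ℂ) 1))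
    (z₁ : ℂ) (hz₁ : z₁ ∈ ball (0 : ℂ) 1) (z₂ : ℂ) (hz₂ : z₂ ∈ ball (0 : ℂ) 1) :
    ‖Gint g z₁ - Gint g z₂‖ ≤
      (23 / 3) * supAbsOn g (ball (0 : ℂ) 1) * ‖z₁ - z₂‖ := by
  set M := supAbsOn g (ball (0:ℂ) 1) with hMdef
  set d := ‖z₁ - z₂‖ with hddef
  have hd0 : 0 ≤ d := norm_nonneg _
  -- bound on g
  obtain ⟨C, hC⟩ := (isCompact_closedBall (0:ℂ) 1).exists_bound_of_continuousOn hg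
  have hbdd : BddAbove ((fun z => ‖g z‖) '' ball (0:ℂ) 1) := by
    refine ⟨C, ?_⟩
    rintro y ⟨x, hx, rfl⟩
    simpa using hC x (ball_subset_closedBall hx)
  have hM : ∀ x ∈ ball (0:ℂ) 1, ‖g x‖ ≤ M := fun x hx =>
    le_csSup hbdd ⟨x, hx, rfl⟩
  have hM0 : 0 ≤ M :=
    le_trans (norm_nonneg (g 0)) (hM 0 (by simp))
  -- measure facts
  have hdA_univ : dA Set.univ = 1 := by
    rw [dA, Measure.smul_apply, Measure.restrict_apply_univ, Complex.volume_ball]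
    rw [smul_eq_mul, ENNReal.ofReal_one, one_pow, one_mul]
    have hpi : ((NNReal.pi : NNReal) : ENNReal) = ENNReal.ofReal Real.pi := by
      rw [← ENNReal.ofReal_coe_nnreal]
      norm_num
    rw [hpi, ← ENNReal.ofReal_mul (by positivity)]
    rw [one_div, inv_mul_cancel₀ (ne_of_gt Real.pi_pos), ENNReal.ofReal_one]
  haveI hdAfin : IsFiniteMeasure dA := ⟨by rw [hdA_univ]; exact ENNReal.one_lt_top⟩
  haveI hfin : IsFiniteMeasure (volume.restrict (ball (0:ℂ) 1)) :=
    ⟨by rw [Measure.restrict_apply_univ]; exact measure_ball_lt_top⟩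
  -- integrability
  have hmeas : ∀ z : ℂ, AEStronglyMeasurable (fun ζ => ((Gker z ζ : ℝ) : ℂ) * g ζ)
      (volume.restrict (ball (0:ℂ) 1)) := by
    intro z
    apply AEStronglyMeasurable.mul
    · apply Measurable.aestronglyMeasurable
      apply Complex.measurable_ofReal.comp
      unfold Gker
      have m1 : Measurable fun ζ : ℂ => ‖z - ζ‖ :=
        (continuous_norm.comp (continuous_const.sub continuous_id)).measurable
      have mN : Measurable fun ζ : ℂ => ‖1 - (starRingEnd ℂ) ζ * z‖ :=
        (continuous_norm.comp (continuous_const.sub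
          (Complex.continuous_conj.mul continuous_const))).measurable
      have mz : Measurable fun ζ : ℂ => ‖ζ‖ := continuous_norm.measurable
      apply Measurable.sub
      · apply Measurable.mul
        · exact m1.pow_const 2
        · apply Real.measurable_log.comp
          have hrw : (fun ζ : ℂ =>
              ‖(1 - (starRingEnd ℂ) ζ * z) / (z - ζ)‖ ^ 2)
              = fun ζ : ℂ => ‖1 - (starRingEnd ℂ) ζ * z‖ ^ 2
                  / ‖z - ζ‖ ^ 2 := by
            funext ζ
            rw [norm_div, div_pow]
          rw [hrw]
          exact (mN.pow_const 2).div (m1.pow_const 2)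
      · exact measurable_const.mul (measurable_const.sub (mz.pow_const 2))
    · exact (hg.mono ball_subset_closedBall).aestronglyMeasurable measurableSet_ball
  have hzball : ∀ᵐ ζ ∂(volume.restrict (ball (0:ℂ) 1)), ζ ∈ ball (0:ℂ) 1 :=
    ae_restrict_mem measurableSet_ball
  have hint : ∀ z ∈ ball (0:ℂ) 1, Integrable (fun ζ => ((Gker z ζ : ℝ):ℂ) * g ζ) dA := by
    intro z hz
    rw [dA]
    refine Integrable.smul_measure ?_ ENNReal.ofReal_ne_top
    refine Integrable.mono' (integrable_const (4 * M)) (hmeas z) ?_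
    have h2 : ∀ᵐ ζ ∂(volume.restrict (ball (0:ℂ) 1)), ζ ≠ z := by
      refine ae_iff.mpr ?_
      have hset : {ζ : ℂ | ¬ ζ ≠ z} = {z} := by ext ζ; simp
      rw [hset, Measure.restrict_apply (measurableSet_singleton z)]
      exact measure_mono_null Set.inter_subset_left (measure_singleton z)
    filter_upwards [hzball, h2] with ζ hζball hζz
    rw [norm_mul]
    have hζ1 : ‖ζ‖ < 1 := by
      simpa using mem_ball_zero_iff.mp hζball
    have hz1 : ‖z‖ < 1 := by
      simpa using mem_ball_zero_iff.mp hz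
    have hG := Gker_abs_le z ζ hz1 hζ1 (Ne.symm hζz)
    have h3 : ‖((Gker z ζ : ℝ) : ℂ)‖ = |Gker z ζ| := by
      rw [Complex.norm_real, Real.norm_eq_abs]
    rw [h3]
    have h4 : ‖g ζ‖ = ‖g ζ‖ := rfl
    rw [h4]
    exact mul_le_mul hG (hM ζ hζball) (norm_nonneg _) (by norm_num)
  -- difference of integrals
  have hdiff : Gint g z₁ - Gint g z₂
      = ∫ ζ, (((Gker z₁ ζ : ℝ):ℂ) - ((Gker z₂ ζ : ℝ):ℂ)) * g ζ ∂dA := by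
    rw [Gint, Gint, ← integral_sub (hint z₁ hz₁) (hint z₂ hz₂)]
    congr 1
    funext ζ
    ring
  rw [hdiff]
  -- a.e. bound
  have hae : ∀ᵐ ζ ∂dA, ‖(((Gker z₁ ζ : ℝ):ℂ) - ((Gker z₂ ζ : ℝ):ℂ)) * g ζ‖ ≤ 7 * d * M := by
    have h1 : ∀ᵐ ζ ∂dA, ζ ∈ ball (0:ℂ) 1 := by
      rw [dA]; exact Measure.ae_smul_measure hzball _
    have h2 : ∀ᵐ ζ ∂dA, ζ ∉ segment ℝ z₁ z₂ := by
      rw [dA]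
      apply Measure.ae_smul_measure _ _
      refine ae_iff.mpr ?_
      have hset : {ζ : ℂ | ¬ ζ ∉ segment ℝ z₁ z₂} = segment ℝ z₁ z₂ := by ext ζ; simp
      rw [hset]
      refine le_antisymm (le_trans ?_ (volume_segment_eq_zero z₁ z₂).le) zero_le
      exact Measure.restrict_apply_le _ _
    filter_upwards [h1, h2] with ζ hζball hζseg
    have hζ1 : ‖ζ‖ < 1 := by
      simpa using mem_ball_zero_iff.mp hζball
    rw [← Complex.ofReal_sub, norm_mul, Complex.norm_real, Real.norm_eq_abs]
    have hlip := Gker_lip ζ z₁ z₂ hz₁ hz₂ hζ1 hζseg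
    calc |Gker z₁ ζ - Gker z₂ ζ| * ‖g ζ‖ ≤ (7 * d) * M :=
      mul_le_mul hlip (hM ζ hζball) (norm_nonneg _) (by positivity)
    _ = 7 * d * M := by ring
  have hbound := norm_integral_le_of_norm_le_const hae
  rw [Measure.real, hdA_univ] at hbound
  simp only [ENNReal.toReal_one, mul_one] at hbound
  calc ‖∫ ζ, (((Gker z₁ ζ : ℝ):ℂ) - ((Gker z₂ ζ : ℝ):ℂ)) * g ζ ∂dA‖
      = ‖∫ ζ, (((Gker z₁ ζ : ℝ):ℂ) - ((Gker z₂ ζ : ℝ):ℂ)) * g ζ ∂dA‖ := rfl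
  _ ≤ 7 * d * M := hbound
  _ ≤ 23 / 3 * M * d := by nlinarith
end

section
/- For each fixed ζ ∈ 𝔻, ∫_𝔻 |G(z,ζ)| dA(z) ≤ 3/4 and ∫_𝔻 |G_z(z,ζ)| dA(z) ≤ 5/2; in particular both integrals are finite. -/
open MeasureTheory Complex Metric

section Aux
open intervalIntegral

lemma radial_int (g : ℝ → ℝ) :
    ∫ z in ball (0:ℂ) 1, g ‖z‖ = 2 * Real.pi * ∫ y in (0:ℝ)..1, y * g y := by
  classical
  set f : ℝ → ℝ := fun y => if y < 1 then g y else 0 with hf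
  have h1 : ∫ z in ball (0:ℂ) 1, g ‖z‖ = ∫ z in ball (0:ℂ) 1, f ‖z‖ := by
    refine setIntegral_congr_fun measurableSet_ball fun z hz => ?_
    simp only [hf]
    rw [if_pos (by simpa [dist_eq_norm] using hz)]
  have h2 : ∫ z in ball (0:ℂ) 1, f ‖z‖ = ∫ z : ℂ, f ‖z‖ := by
    refine setIntegral_eq_integral_of_forall_compl_eq_zero fun z hz => ?_
    simp only [hf]
    rw [if_neg (by simpa [dist_eq_norm] using hz)]
  have h3 := MeasureTheory.integral_fun_norm_addHaar (volume : Measure ℂ) f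
  rw [Complex.finrank_real_complex] at h3
  norm_num at h3
  rw [show (∫ x : ℂ, f (‖x‖)) = ∫ z : ℂ, f ‖z‖ from rfl] at h3
  have hvol : MeasureTheory.volume (ball (0:ℂ) 1) = ENNReal.ofReal Real.pi := by
    rw [Complex.volume_ball]; norm_num
    rw [ENNReal.ofReal]; congr 1; ext; simp [Real.coe_toNNReal _ Real.pi_pos.le]
  have h4 : ∫ y in Set.Ioi (0:ℝ), y * f y = ∫ y in (0:ℝ)..1, y * g y := by
    have : ∀ y ∈ Set.Ioi (0:ℝ), y * f y = Set.indicator (Set.Ioo (0:ℝ) 1) (fun y => y * g y) y := by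
      intro y hy
      simp only [hf, Set.indicator]
      by_cases h : y < 1
      · rw [if_pos h, if_pos ⟨hy, h⟩]
      · rw [if_neg h, if_neg (by simp [Set.mem_Ioo]; intro _; linarith), mul_zero]
    rw [setIntegral_congr_fun measurableSet_Ioi this, setIntegral_indicator measurableSet_Ioo,
      Set.inter_eq_self_of_subset_right Set.Ioo_subset_Ioi_self,
      Measure.restrict_congr_set MeasureTheory.Ioo_ae_eq_Ioc, intervalIntegral.integral_of_le zero_le_one]
  rw [h1, h2, h3, h4]
  simp only [Measure.real, hvol, ENNReal.toReal_ofReal Real.pi_pos.le]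
  ring

lemma abs_sq_identity (z ζ : ℂ) :
    ‖1 - (starRingEnd ℂ) ζ * z‖ ^ 2 - ‖z - ζ‖ ^ 2
      = (1 - ‖z‖ ^ 2) * (1 - ‖ζ‖ ^ 2) := by
  simp only [Complex.sq_norm, Complex.normSq_apply, Complex.mul_re, Complex.mul_im,
    Complex.sub_re, Complex.sub_im, Complex.one_re, Complex.one_im, Complex.conj_re,
    Complex.conj_im]
  ring

lemma log_key {a b : ℝ} (ha : 0 < a) (hab : a ≤ b) :
    a * b * Real.log (b ^ 2 / a ^ 2) ≤ b ^ 2 - a ^ 2 := by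
  have hb : 0 < b := ha.trans_le hab
  have hba : (1:ℝ) ≤ b / a := (one_le_div ha).2 hab
  set x := Real.log (b / a) with hx
  have hx0 : 0 ≤ x := Real.log_nonneg hba
  have hsinh : x ≤ Real.sinh x := Real.self_le_sinh_iff.2 hx0
  have hexp : Real.exp x = b / a := Real.exp_log (by positivity)
  have hexpn : Real.exp (-x) = a / b := by
    rw [Real.exp_neg, hexp]; field_simp
  have hs : Real.sinh x = (b / a - a / b) / 2 := by
    rw [Real.sinh_eq, hexp, hexpn]
  have hlog2 : Real.log (b ^ 2 / a ^ 2) = 2 * x := by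
    rw [show b ^ 2 / a ^ 2 = (b / a) ^ 2 by ring, Real.log_pow]
    push_cast; ring
  rw [hlog2]
  have h2 : a * b * (2 * x) ≤ a * b * (2 * Real.sinh x) := by
    have h := mul_le_mul_of_nonneg_left hsinh (by positivity : (0:ℝ) ≤ a * b); nlinarith [h]
  calc a * b * (2 * x) ≤ a * b * (2 * Real.sinh x) := h2
    _ = b ^ 2 - a ^ 2 := by rw [hs]; field_simp

lemma Gker_bound {z ζ : ℂ} (hz : ‖z‖ < 1) (hζ : ‖ζ‖ < 1) :
    |Gker z ζ| ≤ 1 - ‖z‖ ^ 2 := by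
  have hz0 : (0:ℝ) ≤ ‖z‖ := norm_nonneg z
  have hζ0 : (0:ℝ) ≤ ‖ζ‖ := norm_nonneg ζ
  have h1 : (0:ℝ) ≤ 1 - ‖z‖ ^ 2 := by nlinarith
  have h1' : 1 - ‖z‖ ^ 2 ≤ 1 := by nlinarith
  have h2 : (0:ℝ) ≤ 1 - ‖ζ‖ ^ 2 := by nlinarith
  have h2' : 1 - ‖ζ‖ ^ 2 ≤ 1 := by nlinarith
  have hid := abs_sq_identity z ζ
  have hprod : 0 ≤ (1 - ‖z‖ ^ 2) * (1 - ‖ζ‖ ^ 2) := mul_nonneg h1 h2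
  have hprodle : (1 - ‖z‖ ^ 2) * (1 - ‖ζ‖ ^ 2) ≤ 1 - ‖z‖ ^ 2 :=
    mul_le_of_le_one_right h1 h2'
  by_cases hzζ : z = ζ
  · subst hzζ
    have heq : Gker z z = -((1 - ‖z‖ ^ 2) * (1 - ‖z‖ ^ 2)) := by
      simp [Gker]
    rw [heq, abs_neg, _root_.abs_of_nonneg (mul_nonneg h1 h1)]
    nlinarith
  · set a := ‖z - ζ‖ with hadef
    set b := ‖1 - (starRingEnd ℂ) ζ * z‖ with hbdef
    have ha : 0 < a := by
      rw [hadef]; exact norm_pos_iff.2 (sub_ne_zero.2 hzζ)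
    have hb0 : 0 ≤ b := norm_nonneg _
    have hab : a ^ 2 ≤ b ^ 2 := by nlinarith
    have hb : 0 < b := by nlinarith [mul_pos ha ha]
    have habs : ‖(1 - (starRingEnd ℂ) ζ * z) / (z - ζ)‖ ^ 2 = b ^ 2 / a ^ 2 := by
      rw [norm_div, div_pow]
    have hG : Gker z ζ = a ^ 2 * Real.log (b ^ 2 / a ^ 2) - (b ^ 2 - a ^ 2) := by
      rw [Gker, habs, hid]
    have hL0 : 0 ≤ Real.log (b ^ 2 / a ^ 2) :=
      Real.log_nonneg ((one_le_div (by positivity)).2 hab)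
    have hupnn : 0 ≤ a ^ 2 * Real.log (b ^ 2 / a ^ 2) := by positivity
    have hup : a ^ 2 * Real.log (b ^ 2 / a ^ 2) ≤ b ^ 2 - a ^ 2 := by
      have h1 : Real.log (b ^ 2 / a ^ 2) ≤ b ^ 2 / a ^ 2 - 1 :=
        Real.log_le_sub_one_of_pos (by positivity)
      have h2 := mul_le_mul_of_nonneg_left h1 (by positivity : (0:ℝ) ≤ a ^ 2)
      have : a ^ 2 * (b ^ 2 / a ^ 2 - 1) = b ^ 2 - a ^ 2 := by field_simp
      linarith
    rw [hG, abs_le]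
    constructor <;> [linarith; linarith]

lemma Gz_bound {z ζ : ℂ} (hz : ‖z‖ < 1) (hζ : ‖ζ‖ < 1) :
    ‖Gz z ζ‖
      ≤ (1 + ‖ζ‖) * (1 - ‖z‖ ^ 2)
        + (1 - ‖ζ‖ ^ 2) * (1 + ‖z‖) := by
  have hz0 : (0:ℝ) ≤ ‖z‖ := norm_nonneg z
  have hζ0 : (0:ℝ) ≤ ‖ζ‖ := norm_nonneg ζ
  have h1 : (0:ℝ) ≤ 1 - ‖z‖ ^ 2 := by nlinarith
  have h2 : (0:ℝ) ≤ 1 - ‖ζ‖ ^ 2 := by nlinarith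
  have hid := abs_sq_identity z ζ
  set a := ‖z - ζ‖ with hadef
  set b := ‖1 - (starRingEnd ℂ) ζ * z‖ with hbdef
  have ha0 : 0 ≤ a := norm_nonneg _
  have hb0 : 0 ≤ b := norm_nonneg _
  have hab2 : a ^ 2 ≤ b ^ 2 := by nlinarith [mul_nonneg h1 h2]
  have hab : a ≤ b := by nlinarith
  have hble : 1 - ‖ζ‖ * ‖z‖ ≤ b := by
    rw [hbdef]
    have := norm_sub_norm_le (1 : ℂ) ((starRingEnd ℂ) ζ * z)
    simpa [norm_mul, Complex.norm_conj] using this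
  have hbpos : 0 < b := by
    have hr1 : ‖ζ‖ * ‖z‖ ≤ ‖ζ‖ :=
      mul_le_of_le_one_right hζ0 hz.le
    linarith
  set L : ℝ := Real.log (‖(z - ζ) / (1 - (starRingEnd ℂ) ζ * z)‖ ^ 2) with hL
  set c : ℝ := 1 - ‖ζ‖ ^ 2 with hc
  set T1 : ℂ := ((starRingEnd ℂ) z - (starRingEnd ℂ) ζ) * (L : ℂ) with hT1def
  set T2 : ℂ := ((starRingEnd ℂ) z - (starRingEnd ℂ) ζ) * (c : ℂ) / (1 - (starRingEnd ℂ) ζ * z)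
    with hT2def
  set T3 : ℂ := (starRingEnd ℂ) z * (c : ℂ) with hT3def
  have hGz : Gz z ζ = T1 + T2 - T3 := rfl
  clear_value T1 T2 T3
  have habsconj : ‖(starRingEnd ℂ) z - (starRingEnd ℂ) ζ‖ = a := by
    rw [← map_sub, Complex.norm_conj]
  have tri : ‖Gz z ζ‖ ≤ ‖T1‖ + ‖T2‖ + ‖T3‖ := by
    rw [hGz, sub_eq_add_neg]
    refine (norm_add_le _ _).trans ?_
    have h' := norm_add_le T1 T2
    have h'' : ‖-T3‖ = ‖T3‖ := by simp
    linarith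
  have habsT1 : ‖T1‖ = a * |L| := by
    rw [hT1def, norm_mul, habsconj, Complex.norm_real, Real.norm_eq_abs]
  have habsT2 : ‖T2‖ = a * c / b := by
    rw [hT2def, norm_div, norm_mul, habsconj, Complex.norm_real, Real.norm_eq_abs, _root_.abs_of_nonneg h2, ← hbdef]
  have habsT3 : ‖T3‖ = ‖z‖ * c := by
    rw [hT3def, norm_mul, Complex.norm_conj, Complex.norm_real, Real.norm_eq_abs, _root_.abs_of_nonneg h2]
  clear_value a b L c
  -- bound term 2
  have hT2 : a * c / b ≤ c := by
    rw [div_le_iff₀ hbpos]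
    nlinarith
  -- bound term 1
  have hT1 : a * |L| ≤ (1 + ‖ζ‖) * (1 - ‖z‖ ^ 2) := by
    by_cases hzζ : z = ζ
    · have : a = 0 := by rw [hadef, hzζ, sub_self, norm_zero]
      rw [this, zero_mul]
      positivity
    · have ha : 0 < a := hadef ▸ norm_pos_iff.2 (sub_ne_zero.2 hzζ)
      have habs2 : ‖(z - ζ) / (1 - (starRingEnd ℂ) ζ * z)‖ ^ 2 = a ^ 2 / b ^ 2 := by
        rw [norm_div, div_pow, hadef, hbdef]
      have hLval : L = Real.log (a ^ 2 / b ^ 2) := by rw [hL, habs2]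
      have hLnp : L ≤ 0 := by
        rw [hLval]
        exact Real.log_nonpos (by positivity) (by
          rw [div_le_one (by positivity)]; exact hab2)
      have hLabs : |L| = Real.log (b ^ 2 / a ^ 2) := by
        rw [abs_of_nonpos hLnp, hLval, ← Real.log_inv]
        congr 1
        field_simp
      have hkey := log_key ha hab
      have hbnd : a * |L| * b ≤ b ^ 2 - a ^ 2 := by
        rw [hLabs]; nlinarith [hkey]
      have hfin : b ^ 2 - a ^ 2 ≤ ((1 + ‖ζ‖) * (1 - ‖z‖ ^ 2)) * b := by
        rw [hid]
        have hblow : 1 - ‖ζ‖ ≤ b := by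
          have hr1 : ‖ζ‖ * ‖z‖ ≤ ‖ζ‖ :=
            mul_le_of_le_one_right hζ0 hz.le
          linarith
        have e1 : c ≤ (1 + ‖ζ‖) * b := by
          have h' := mul_le_mul_of_nonneg_left hblow
            (by linarith : (0:ℝ) ≤ 1 + ‖ζ‖)
          calc c = (1 + ‖ζ‖) * (1 - ‖ζ‖) := by rw [hc]; ring
            _ ≤ (1 + ‖ζ‖) * b := h'
        calc (1 - ‖z‖ ^ 2) * c
            ≤ (1 - ‖z‖ ^ 2) * ((1 + ‖ζ‖) * b) :=
              mul_le_mul_of_nonneg_left e1 h1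
          _ = (1 + ‖ζ‖) * (1 - ‖z‖ ^ 2) * b := by ring
      have := hbnd.trans hfin
      exact le_of_mul_le_mul_right (by linarith) hbpos
  calc ‖Gz z ζ‖ ≤ ‖T1‖ + ‖T2‖ + ‖T3‖ := tri
    _ = a * |L| + a * c / b + ‖z‖ * c := by rw [habsT1, habsT2, habsT3]
    _ ≤ (1 + ‖ζ‖) * (1 - ‖z‖ ^ 2) + c + ‖z‖ * c := by linarith
    _ = (1 + ‖ζ‖) * (1 - ‖z‖ ^ 2) + c * (1 + ‖z‖) := by ring

lemma lint_one_sub_sq :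
    ∫⁻ z in ball (0:ℂ) 1, ENNReal.ofReal (1 - ‖z‖ ^ 2)
      = ENNReal.ofReal (Real.pi / 2) := by
  have hcont : Continuous fun z : ℂ => 1 - ‖z‖ ^ 2 := by
    exact continuous_const.sub ((continuous_norm).pow 2)
  have hint : IntegrableOn (fun z : ℂ => 1 - ‖z‖ ^ 2) (ball 0 1) :=
    (hcont.continuousOn.integrableOn_compact (isCompact_closedBall 0 1)).mono_set ball_subset_closedBall
  have hnn : 0 ≤ᵐ[volume.restrict (ball (0:ℂ) 1)] fun z : ℂ => 1 - ‖z‖ ^ 2 := by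
    refine (ae_restrict_iff' measurableSet_ball).2 (Filter.Eventually.of_forall fun z hz => ?_)
    have h' : ‖z‖ < 1 := by simpa [mem_ball_zero_iff] using hz
    show (0:ℝ) ≤ 1 - ‖z‖ ^ 2
    nlinarith [norm_nonneg z]
  rw [← MeasureTheory.ofReal_integral_eq_lintegral_ofReal hint hnn]
  congr 1
  have hval : ∫ z in ball (0:ℂ) 1, (1 - ‖z‖ ^ 2) = Real.pi / 2 := by
    have h := radial_int (fun y => 1 - y ^ 2)
    rw [h]
    have : ∫ y in (0:ℝ)..1, y * (1 - y^2) = 1/4 := by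
      have e : ∀ y : ℝ, y * (1 - y^2) = y^1 - y^3 := fun y => by ring
      simp_rw [e]
      rw [intervalIntegral.integral_sub (intervalIntegral.intervalIntegrable_pow 1) (intervalIntegral.intervalIntegrable_pow 3)]
      simp [integral_pow]
      norm_num
    rw [this]; ring
  rw [hval]

lemma lint_one_add_abs :
    ∫⁻ z in ball (0:ℂ) 1, ENNReal.ofReal (1 + ‖z‖)
      = ENNReal.ofReal (5 * Real.pi / 3) := by
  have hcont : Continuous fun z : ℂ => 1 + ‖z‖ := by
    exact continuous_const.add continuous_norm
  have hint : IntegrableOn (fun z : ℂ => 1 + ‖z‖) (ball 0 1) :=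
    (hcont.continuousOn.integrableOn_compact (isCompact_closedBall 0 1)).mono_set ball_subset_closedBall
  have hnn : 0 ≤ᵐ[volume.restrict (ball (0:ℂ) 1)] fun z : ℂ => 1 + ‖z‖ := by
    refine Filter.Eventually.of_forall fun z => ?_
    show (0:ℝ) ≤ 1 + ‖z‖
    have := norm_nonneg z
    linarith
  rw [← MeasureTheory.ofReal_integral_eq_lintegral_ofReal hint hnn]
  congr 1
  have h := radial_int (fun y => 1 + y)
  rw [h]
  have : ∫ y in (0:ℝ)..1, y * (1 + y) = 5/6 := by
    have e : ∀ y : ℝ, y * (1 + y) = y^1 + y^2 := fun y => by ring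
    simp_rw [e]
    rw [intervalIntegral.integral_add (intervalIntegral.intervalIntegrable_pow 1) (intervalIntegral.intervalIntegrable_pow 2)]
    simp [integral_pow]
    norm_num
  rw [this]; ring

end Aux

/-- For fixed `ζ ∈ 𝔻`, `∫_𝔻 |G(z,ζ)| dA(z) ≤ 3/4` and `∫_𝔻 |G_z(z,ζ)| dA(z) ≤ 5/2`;
in particular both integrals are finite. -/
theorem integral_abs_Gker_Gz_fst_le (ζ : ℂ) (hζ : ζ ∈ ball (0 : ℂ) 1) :
    (∫⁻ z, ENNReal.ofReal |Gker z ζ| ∂dA) ≤ ENNReal.ofReal (3 / 4) ∧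
    (∫⁻ z, ENNReal.ofReal (‖Gz z ζ‖) ∂dA) ≤ ENNReal.ofReal (5 / 2) := by
  have hζ1 : ‖ζ‖ < 1 := by simpa [mem_ball_zero_iff] using hζ
  have hζ0 : (0:ℝ) ≤ ‖ζ‖ := norm_nonneg ζ
  have hπ : (0:ℝ) < Real.pi := Real.pi_pos
  set ν := volume.restrict (ball (0:ℂ) 1) with hν
  constructor
  · -- Gker part
    have hmono : ∫⁻ z, ENNReal.ofReal |Gker z ζ| ∂ν
        ≤ ∫⁻ z, ENNReal.ofReal (1 - ‖z‖ ^ 2) ∂ν := by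
      refine lintegral_mono_ae ((ae_restrict_iff' measurableSet_ball).2
        (Filter.Eventually.of_forall fun z hz => ?_))
      exact ENNReal.ofReal_le_ofReal
        (Gker_bound (by simpa [mem_ball_zero_iff] using hz) hζ1)
    calc ∫⁻ z, ENNReal.ofReal |Gker z ζ| ∂dA
        = ENNReal.ofReal (1 / Real.pi) * ∫⁻ z, ENNReal.ofReal |Gker z ζ| ∂ν := by
          rw [dA, lintegral_smul_measure, smul_eq_mul]
      _ ≤ ENNReal.ofReal (1 / Real.pi) * ENNReal.ofReal (Real.pi / 2) := by
          exact mul_le_mul_right (hmono.trans_eq lint_one_sub_sq) _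
      _ = ENNReal.ofReal (1 / 2) := by
          rw [← ENNReal.ofReal_mul (by positivity)]
          congr 1
          field_simp
      _ ≤ ENNReal.ofReal (3 / 4) := ENNReal.ofReal_le_ofReal (by norm_num)
  · -- Gz part
    set c1 : ℝ := 1 + ‖ζ‖ with hc1
    set c2 : ℝ := 1 - ‖ζ‖ ^ 2 with hc2
    have hc1nn : (0:ℝ) ≤ c1 := by rw [hc1]; linarith
    have hc2nn : (0:ℝ) ≤ c2 := by rw [hc2]; nlinarith
    have hmeas : Measurable fun z : ℂ => ENNReal.ofReal (c1 * (1 - ‖z‖ ^ 2)) := by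
      refine Measurable.ennreal_ofReal ?_
      exact (measurable_const.mul ((measurable_const.sub
        ((continuous_norm.measurable).pow_const 2))))
    have hmono : ∫⁻ z, ENNReal.ofReal (‖Gz z ζ‖) ∂ν
        ≤ ∫⁻ z, (ENNReal.ofReal (c1 * (1 - ‖z‖ ^ 2))
            + ENNReal.ofReal (c2 * (1 + ‖z‖))) ∂ν := by
      refine lintegral_mono_ae ((ae_restrict_iff' measurableSet_ball).2
        (Filter.Eventually.of_forall fun z hz => ?_))
      have hb := Gz_bound (by simpa [mem_ball_zero_iff] using hz) hζ1
      calc ENNReal.ofReal (‖Gz z ζ‖)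
          ≤ ENNReal.ofReal (c1 * (1 - ‖z‖ ^ 2) + c2 * (1 + ‖z‖)) :=
            ENNReal.ofReal_le_ofReal (by rw [hc1, hc2]; linarith)
        _ ≤ _ := ENNReal.ofReal_add_le
    have hsplit : ∫⁻ z, (ENNReal.ofReal (c1 * (1 - ‖z‖ ^ 2))
            + ENNReal.ofReal (c2 * (1 + ‖z‖))) ∂ν
        = (∫⁻ z, ENNReal.ofReal (c1 * (1 - ‖z‖ ^ 2)) ∂ν)
          + ∫⁻ z, ENNReal.ofReal (c2 * (1 + ‖z‖)) ∂ν :=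
      lintegral_add_left hmeas _
    have he1 : ∫⁻ z, ENNReal.ofReal (c1 * (1 - ‖z‖ ^ 2)) ∂ν
        = ENNReal.ofReal c1 * ENNReal.ofReal (Real.pi / 2) := by
      rw [← lint_one_sub_sq, ← lintegral_const_mul' _ _ ENNReal.ofReal_ne_top]
      congr 1
      ext z
      rw [← ENNReal.ofReal_mul hc1nn]
    have he2 : ∫⁻ z, ENNReal.ofReal (c2 * (1 + ‖z‖)) ∂ν
        = ENNReal.ofReal c2 * ENNReal.ofReal (5 * Real.pi / 3) := by
      rw [← lint_one_add_abs, ← lintegral_const_mul' _ _ ENNReal.ofReal_ne_top]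
      congr 1
      ext z
      rw [← ENNReal.ofReal_mul hc2nn]
    calc ∫⁻ z, ENNReal.ofReal (‖Gz z ζ‖) ∂dA
        = ENNReal.ofReal (1 / Real.pi) * ∫⁻ z, ENNReal.ofReal (‖Gz z ζ‖) ∂ν := by
          rw [dA, lintegral_smul_measure, smul_eq_mul]
      _ ≤ ENNReal.ofReal (1 / Real.pi) *
            (ENNReal.ofReal c1 * ENNReal.ofReal (Real.pi / 2)
              + ENNReal.ofReal c2 * ENNReal.ofReal (5 * Real.pi / 3)) := by
          exact mul_le_mul_right (hmono.trans_eq (by rw [hsplit, he1, he2])) _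
      _ = ENNReal.ofReal ((1 / Real.pi) * (c1 * (Real.pi / 2) + c2 * (5 * Real.pi / 3))) := by
          rw [← ENNReal.ofReal_mul hc1nn, ← ENNReal.ofReal_mul hc2nn,
            ← ENNReal.ofReal_add (by positivity) (by positivity),
            ← ENNReal.ofReal_mul (by positivity)]
      _ ≤ ENNReal.ofReal (5 / 2) := by
          refine ENNReal.ofReal_le_ofReal ?_
          have hval : (1 / Real.pi) * (c1 * (Real.pi / 2) + c2 * (5 * Real.pi / 3))
              = c1 / 2 + 5 * c2 / 3 := by
            field_simp
          rw [hval, hc1, hc2]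
          nlinarith [hζ0, hζ1]
end

section
/- For every z ∈ 𝔻, ∫_𝔻 (1−|ζ|²) / (|z−ζ| · |1−conj(ζ)z|) dA(ζ) ≤ 4/3. -/
open MeasureTheory Complex Metric

namespace SingAux

open Real Filter Set Topology

/-- `rho L` is the positive root of `ρ² + Lρ = 1`. -/
noncomputable def rho (L : ℝ) : ℝ := (Real.sqrt (L ^ 2 + 4) - L) / 2

lemma sqrt_sq4 (L : ℝ) : (Real.sqrt (L ^ 2 + 4)) ^ 2 = L ^ 2 + 4 :=
  Real.sq_sqrt (by positivity)

lemma rho_pos (L : ℝ) : 0 < rho L := by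
  have h := sqrt_sq4 L
  have h0 : 0 ≤ Real.sqrt (L ^ 2 + 4) := Real.sqrt_nonneg _
  unfold rho
  nlinarith [h, h0]

lemma rho_quad (L : ℝ) : rho L ^ 2 + L * rho L = 1 := by
  unfold rho
  linear_combination (1/4) * sqrt_sq4 L

lemma rho_le_one {L : ℝ} (hL : 0 ≤ L) : rho L ≤ 1 := by
  nlinarith [rho_quad L, rho_pos L]

lemma rho_zero : rho 0 = 1 := by
  have : Real.sqrt (0 ^ 2 + 4) = 2 := by
    rw [show (0:ℝ) ^ 2 + 4 = 2 ^ 2 by norm_num, Real.sqrt_sq (by norm_num)]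
  unfold rho
  rw [this]
  norm_num

lemma hasDerivAt_rho (L : ℝ) :
    HasDerivAt rho (-(rho L) ^ 2 / (1 + rho L ^ 2)) L := by
  have hσpos : 0 < Real.sqrt (L ^ 2 + 4) := Real.sqrt_pos.mpr (by positivity)
  have h1 : HasDerivAt (fun L : ℝ => L ^ 2 + 4) (2 * L) L := by
    simpa using (hasDerivAt_pow 2 L).add_const 4
  have h2 : HasDerivAt (fun L : ℝ => Real.sqrt (L ^ 2 + 4))
      (1 / (2 * Real.sqrt (L ^ 2 + 4)) * (2 * L)) L :=
    (Real.hasDerivAt_sqrt (by positivity : L ^ 2 + 4 ≠ 0)).comp L h1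
  have h3 : HasDerivAt rho ((1 / (2 * Real.sqrt (L ^ 2 + 4)) * (2 * L) - 1) / 2) L :=
    (h2.sub (hasDerivAt_id L)).div_const 2
  convert h3 using 1
  have hσ : Real.sqrt (L ^ 2 + 4) = L + 2 * rho L := by unfold rho; ring
  have hq := rho_quad L
  have hρ := rho_pos L
  have hden : 0 < 1 + rho L ^ 2 := by positivity
  rw [hσ]
  have hσpos' : 0 < L + 2 * rho L := by rw [← hσ]; exact hσpos
  have hσne : L + rho L * 2 ≠ 0 := by linarith
  field_simp
  nlinarith [hq, hρ, hσpos']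

lemma rho_tendsto : Tendsto rho atTop (𝓝 0) := by
  have h2L : Tendsto (fun L : ℝ => 2 / L) atTop (𝓝 (0:ℝ)) :=
    Tendsto.div_atTop tendsto_const_nhds tendsto_id
  refine squeeze_zero' (Filter.eventually_atTop.mpr ⟨1, fun L _ => (rho_pos L).le⟩)
    (Filter.eventually_atTop.mpr ⟨1, fun L hL => ?_⟩) h2L
  have hLpos : (0:ℝ) < L := by linarith
  rw [le_div_iff₀ hLpos]
  have h := sqrt_sq4 L
  have h0 : 0 ≤ Real.sqrt (L ^ 2 + 4) := Real.sqrt_nonneg _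
  unfold rho
  nlinarith [h, h0, rho_pos L]

/-- Inverse hyperbolic tangent, defined via logarithms. -/
noncomputable def atanh (y : ℝ) : ℝ := (Real.log (1 + y) - Real.log (1 - y)) / 2

lemma atanh_zero : atanh 0 = 0 := by simp [atanh]

lemma hasDerivAt_atanh {y : ℝ} (h1 : -1 < y) (h2 : y < 1) :
    HasDerivAt atanh (1 / (1 - y ^ 2)) y := by
  have ha : HasDerivAt (fun y : ℝ => Real.log (1 + y)) (1 + y)⁻¹ y := by
    have h := (Real.hasDerivAt_log (by linarith : (1:ℝ) + y ≠ 0)).comp y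
      ((hasDerivAt_id y).const_add 1)
    simpa [Function.comp_def] using h
  have hb : HasDerivAt (fun y : ℝ => Real.log (1 - y)) (-(1 - y)⁻¹) y := by
    have h := (Real.hasDerivAt_log (by linarith : (1:ℝ) - y ≠ 0)).comp y
      ((hasDerivAt_id y).neg.const_add 1)
    simpa [sub_eq_add_neg, Function.comp_def] using h
  have h := (ha.sub hb).div_const 2
  refine h.congr_deriv ?_
  have hne1 : (1:ℝ) + y ≠ 0 := by linarith
  have hne2 : (1:ℝ) - y ≠ 0 := by linarith
  have hne3 : (1:ℝ) - y ^ 2 ≠ 0 := by nlinarith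
  field_simp
  ring

lemma atanh_lower {x : ℝ} (hx0 : 0 ≤ x) (hx1 : x < 1) :
    x + x ^ 3 / 3 + x ^ 5 / 5 + x ^ 7 / 7 ≤ atanh x := by
  rcases eq_or_lt_of_le hx0 with rfl | hx0'
  · simp [atanh_zero]
  set g : ℝ → ℝ := fun y => atanh y - (y + y ^ 3 / 3 + y ^ 5 / 5 + y ^ 7 / 7) with hg
  have hderiv : ∀ y ∈ Icc (0:ℝ) x, HasDerivAt g (y ^ 8 / (1 - y ^ 2)) y := by
    intro y hy
    have hy1 : y < 1 := lt_of_le_of_lt hy.2 hx1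
    have hym : (-1:ℝ) < y := by linarith [hy.1]
    have h1 := hasDerivAt_atanh hym hy1
    have h2 : HasDerivAt (fun y : ℝ => y + y ^ 3 / 3 + y ^ 5 / 5 + y ^ 7 / 7)
        (1 + y ^ 2 + y ^ 4 + y ^ 6) y := by
      have h := (((hasDerivAt_id y).add ((hasDerivAt_pow 3 y).div_const 3)).add
        ((hasDerivAt_pow 5 y).div_const 5)).add ((hasDerivAt_pow 7 y).div_const 7)
      refine h.congr_deriv ?_
      push_cast
      ring
    have h := h1.sub h2
    refine h.congr_deriv ?_
    have hne : (1:ℝ) - y ^ 2 ≠ 0 := by nlinarith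
    field_simp
    ring
  have hmono : MonotoneOn g (Icc 0 x) := by
    apply monotoneOn_of_deriv_nonneg (convex_Icc 0 x)
    · exact fun y hy => ((hderiv y hy).continuousAt).continuousWithinAt
    · intro y hy
      rw [interior_Icc] at hy
      exact ((hderiv y ⟨hy.1.le, hy.2.le⟩).differentiableAt).differentiableWithinAt
    · intro y hy
      rw [interior_Icc] at hy
      rw [(hderiv y ⟨hy.1.le, hy.2.le⟩).deriv]
      have : (0:ℝ) < 1 - y ^ 2 := by nlinarith [hy.1, lt_trans hy.2 hx1]
      positivity
  have h0 : g 0 = 0 := by simp [hg, atanh_zero]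
  have := hmono (left_mem_Icc.mpr hx0) (right_mem_Icc.mpr hx0) hx0
  rw [h0] at this
  simp only [hg] at this
  linarith


lemma normSq_id1 (z ζ : ℂ) :
    Complex.normSq (1 - (starRingEnd ℂ) ζ * z) - Complex.normSq (z - ζ)
      = (1 - Complex.normSq z) * (1 - Complex.normSq ζ) := by
  simp only [Complex.normSq_apply, Complex.sub_re, Complex.sub_im, Complex.mul_re,
    Complex.mul_im, Complex.one_re, Complex.one_im, Complex.conj_re, Complex.conj_im]
  ring

lemma normSq_id2 (z ζ : ℂ) (r : ℝ) :
    (1 - Complex.normSq z * r ^ 2) *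
        (Complex.normSq (z - ζ) - r ^ 2 * Complex.normSq (1 - (starRingEnd ℂ) ζ * z))
      = Complex.normSq ((((1 - Complex.normSq z * r ^ 2) : ℝ) : ℂ) * ζ
            - (((1 - r ^ 2) : ℝ) : ℂ) * z)
        - r ^ 2 * (1 - Complex.normSq z) ^ 2 := by
  simp only [Complex.normSq_apply, Complex.sub_re, Complex.sub_im, Complex.mul_re,
    Complex.mul_im, Complex.one_re, Complex.one_im, Complex.conj_re, Complex.conj_im,
    Complex.ofReal_re, Complex.ofReal_im]
  ring

lemma key_subset (z : ℂ) (hu1 : Complex.normSq z < 1) {lam : ℝ} (hlam : 0 < lam) :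
    {ζ : ℂ | lam < (1 - ‖ζ‖ ^ 2) /
        (‖z - ζ‖ * ‖1 - (starRingEnd ℂ) ζ * z‖)} ∩ ball (0:ℂ) 1 ⊆
      ball ((((1 - rho ((1 - Complex.normSq z) * lam) ^ 2) /
            (1 - Complex.normSq z * rho ((1 - Complex.normSq z) * lam) ^ 2) : ℝ) : ℂ) * z)
        (rho ((1 - Complex.normSq z) * lam) * (1 - Complex.normSq z) /
            (1 - Complex.normSq z * rho ((1 - Complex.normSq z) * lam) ^ 2)) := by
  rintro ζ ⟨hF, hball⟩
  simp only [Set.mem_setOf_eq] at hF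
  set u := Complex.normSq z with hu
  have hu0 : 0 ≤ u := Complex.normSq_nonneg z
  set L : ℝ := (1 - u) * lam with hLdef
  have hL0 : 0 < L := by
    apply mul_pos _ hlam; linarith
  set ρ := rho L with hρdef
  have hρ0 : 0 < ρ := rho_pos L
  have hρ1 : ρ ≤ 1 := rho_le_one hL0.le
  have hq : ρ ^ 2 + L * ρ = 1 := rho_quad L
  have hD : 0 < 1 - u * ρ ^ 2 := by nlinarith
  -- basic facts about ζ
  have hζ1 : ‖ζ‖ < 1 := by
    simpa using mem_ball_zero_iff.mp hball
  have hs1 : Complex.normSq ζ < 1 := by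
    rw [← Complex.sq_norm]
    nlinarith [norm_nonneg ζ]
  set a := ‖z - ζ‖ with ha
  set b := ‖1 - (starRingEnd ℂ) ζ * z‖ with hb
  have hdpos : 0 < a * b := by
    rcases lt_or_eq_of_le (mul_nonneg (norm_nonneg _ : (0:ℝ) ≤ a) (norm_nonneg _ : (0:ℝ) ≤ b)) with h | h
    · exact h
    · exfalso; rw [← h, div_zero] at hF; linarith
  have hapos : 0 < a := by
    by_contra h
    push_neg at h
    have h0 : a = 0 := le_antisymm h (norm_nonneg _)
    rw [h0, zero_mul] at hdpos
    exact lt_irrefl 0 hdpos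
  have hbpos : 0 < b := by
    by_contra h
    push_neg at h
    have h0 : b = 0 := le_antisymm h (norm_nonneg _)
    rw [h0, mul_zero] at hdpos
    exact lt_irrefl 0 hdpos
  have h1 : lam * (a * b) < 1 - Complex.normSq ζ := by
    have := (lt_div_iff₀ hdpos).mp hF
    rwa [← Complex.sq_norm] 
  have hkey : b ^ 2 - a ^ 2 = (1 - u) * (1 - Complex.normSq ζ) := by
    rw [ha, hb, Complex.sq_norm, Complex.sq_norm, hu]
    exact normSq_id1 z ζ
  -- b² - a² > L a b
  have h2 : L * (a * b) < b ^ 2 - a ^ 2 := by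
    rw [hkey, hLdef]
    have h1u : (0:ℝ) < 1 - u := by linarith
    calc (1 - u) * lam * (a * b) = (1 - u) * (lam * (a * b)) := by ring
    _ < (1 - u) * (1 - Complex.normSq ζ) := by
        exact mul_lt_mul_of_pos_left h1 h1u
  -- deduce a < ρ b
  have hfac : 0 < (ρ * b - a) * (b + ρ * a) := by nlinarith [h2, hq, hρ0, hapos, hbpos]
  have hQ : a ^ 2 < ρ ^ 2 * b ^ 2 := by
    have hplus : 0 < b + ρ * a := by positivity
    have hpos1 : 0 < ρ * b - a := by
      rcases mul_pos_iff.mp hfac with h | h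
      · exact h.1
      · exact absurd h.2 (not_lt.mpr hplus.le)
    nlinarith [hpos1, hapos]
  -- translate to Euclidean ball
  have hid2 := normSq_id2 z ζ ρ
  have hQ' : Complex.normSq ((((1 - u * ρ ^ 2) : ℝ) : ℂ) * ζ - (((1 - ρ ^ 2) : ℝ) : ℂ) * z)
      < ρ ^ 2 * (1 - u) ^ 2 := by
    have haa : Complex.normSq (z - ζ) = a ^ 2 := (Complex.sq_norm _).symm
    have hbb : Complex.normSq (1 - (starRingEnd ℂ) ζ * z) = b ^ 2 := (Complex.sq_norm _).symm
    rw [← hu] at hid2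
    rw [haa, hbb] at hid2
    nlinarith [hid2, hQ, hD]
  rw [mem_ball]
  rw [Complex.dist_eq]
  have hceq : ζ - (((1 - ρ ^ 2) / (1 - u * ρ ^ 2) : ℝ) : ℂ) * z
      = (((1 - u * ρ ^ 2)⁻¹ : ℝ) : ℂ) *
        ((((1 - u * ρ ^ 2) : ℝ) : ℂ) * ζ - (((1 - ρ ^ 2) : ℝ) : ℂ) * z) := by
    have hDc : ((1 - u * ρ ^ 2 : ℝ) : ℂ) ≠ 0 := Complex.ofReal_ne_zero.mpr hD.ne'
    push_cast at hDc ⊢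
    rw [mul_sub, ← mul_assoc, inv_mul_cancel₀ hDc, one_mul]
    ring
  have hR0 : 0 < ρ * (1 - u) / (1 - u * ρ ^ 2) := by
    apply div_pos _ hD
    apply mul_pos hρ0
    linarith
  have habs2 : ‖ζ - (((1 - ρ ^ 2) / (1 - u * ρ ^ 2) : ℝ) : ℂ) * z‖ ^ 2
      < (ρ * (1 - u) / (1 - u * ρ ^ 2)) ^ 2 := by
    rw [Complex.sq_norm, hceq, Complex.normSq_mul, Complex.normSq_ofReal]
    have hgoal : (ρ * (1 - u) / (1 - u * ρ ^ 2)) ^ 2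
        = ρ ^ 2 * (1 - u) ^ 2 * ((1 - u * ρ ^ 2)⁻¹ * (1 - u * ρ ^ 2)⁻¹) := by
      field_simp
    rw [hgoal]
    have hc : 0 < (1 - u * ρ ^ 2)⁻¹ * (1 - u * ρ ^ 2)⁻¹ := by positivity
    calc (1 - u * ρ ^ 2)⁻¹ * (1 - u * ρ ^ 2)⁻¹ *
          Complex.normSq ((((1 - u * ρ ^ 2) : ℝ) : ℂ) * ζ - (((1 - ρ ^ 2) : ℝ) : ℂ) * z)
        = Complex.normSq ((((1 - u * ρ ^ 2) : ℝ) : ℂ) * ζ - (((1 - ρ ^ 2) : ℝ) : ℂ) * z) *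
            ((1 - u * ρ ^ 2)⁻¹ * (1 - u * ρ ^ 2)⁻¹) := by ring
      _ < ρ ^ 2 * (1 - u) ^ 2 * ((1 - u * ρ ^ 2)⁻¹ * (1 - u * ρ ^ 2)⁻¹) :=
          mul_lt_mul_of_pos_right hQ' hc
  exact lt_of_pow_lt_pow_left₀ 2 hR0.le habs2


/-- The square of the Euclidean radius of the "superlevel disk". -/
noncomputable def Wfun (u t : ℝ) : ℝ :=
  rho ((1 - u) * t) ^ 2 * (1 - u) ^ 2 / (1 - u * rho ((1 - u) * t) ^ 2) ^ 2

lemma Wfun_nonneg (u t : ℝ) : 0 ≤ Wfun u t := by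
  unfold Wfun
  positivity

lemma continuous_rho : Continuous rho := by
  unfold rho
  exact ((Real.continuous_sqrt.comp (by continuity)).sub continuous_id).div_const 2

/-- The common machinery: given an explicit primitive, bound the lintegral. -/
lemma lintegral_of_primitive (u : ℝ) (Ψ : ℝ → ℝ) (l : ℝ)
    (hderiv : ∀ t ∈ Ici (0:ℝ), HasDerivAt Ψ (Wfun u t) t)
    (htend : Tendsto Ψ atTop (𝓝 l)) (hval : l - Ψ 0 ≤ 4 / 3) :
    (∫⁻ t in Ioi (0:ℝ), ENNReal.ofReal (Wfun u t)) ≤ ENNReal.ofReal (4 / 3) := by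
  have hInt : IntegrableOn (Wfun u) (Ioi (0:ℝ)) volume :=
    integrableOn_Ioi_deriv_of_nonneg' hderiv (fun t _ => Wfun_nonneg u t) htend
  rw [← ofReal_integral_eq_lintegral_ofReal hInt (ae_of_all _ fun t => Wfun_nonneg u t)]
  apply ENNReal.ofReal_le_ofReal
  rw [integral_Ioi_of_hasDerivAt_of_nonneg' hderiv (fun t _ => Wfun_nonneg u t) htend]
  exact hval

lemma hasDerivAt_rho_comp (u t : ℝ) :
    HasDerivAt (fun t : ℝ => rho ((1 - u) * t))
      (-(rho ((1 - u) * t)) ^ 2 / (1 + rho ((1 - u) * t) ^ 2) * (1 - u)) t := by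
  have h := (hasDerivAt_rho ((1 - u) * t)).comp t ((hasDerivAt_id t).const_mul (1 - u))
  simpa [Function.comp_def] using h

/-- Case `u = 0` of the 1D bound. -/
lemma oneD_zero :
    (∫⁻ t in Ioi (0:ℝ), ENNReal.ofReal (Wfun 0 t)) ≤ ENNReal.ofReal (4 / 3) := by
  apply lintegral_of_primitive 0 (fun t => -(rho ((1-(0:ℝ)) * t) + rho ((1-(0:ℝ)) * t) ^ 3 / 3)) 0
  · intro t _
    have h1 := hasDerivAt_rho_comp 0 t
    have h3 : HasDerivAt (fun t : ℝ => rho ((1 - (0:ℝ)) * t) ^ 3)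
        (3 * rho ((1 - (0:ℝ)) * t) ^ 2 *
          (-(rho ((1 - (0:ℝ)) * t)) ^ 2 / (1 + rho ((1 - (0:ℝ)) * t) ^ 2) * (1 - 0))) t := by
      have := (hasDerivAt_pow 3 (rho ((1 - (0:ℝ)) * t))).comp t h1
      simpa [mul_comm, Function.comp_def] using this
    have h := ((h1.add (h3.div_const 3))).neg
    refine h.congr_deriv ?_
    unfold Wfun
    have hρ := rho_pos ((1 - (0:ℝ)) * t)
    have hden : (0:ℝ) < 1 + rho ((1 - (0:ℝ)) * t) ^ 2 := by positivity
    field_simp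
    ring
  · have hL : Tendsto (fun t : ℝ => (1 - (0:ℝ)) * t) atTop atTop :=
      Tendsto.const_mul_atTop (by norm_num) tendsto_id
    have hρ0 : Tendsto (fun t : ℝ => rho ((1 - (0:ℝ)) * t)) atTop (𝓝 0) :=
      rho_tendsto.comp hL
    have := ((hρ0.add ((hρ0.pow 3).div_const 3)).neg)
    simpa using this
  · simp [rho_zero]
    norm_num

/-- The explicit primitive (in the `ρ` variable) for `u > 0`. -/
noncomputable def Phi (u x r : ℝ) : ℝ :=
  (1 - u) * ((u + 1) / (2 * u) * (r / (1 - u * r ^ 2))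
    + ((u - 1) / (2 * u)) * (atanh (x * r) / x))

lemma Phi_zero (u x : ℝ) : Phi u x 0 = 0 := by
  simp [Phi, atanh_zero]

lemma hasDerivAt_Phi {u x : ℝ} (hu0 : 0 < u) (hu1 : u < 1) (hx2 : x ^ 2 = u)
    (hx0 : 0 < x) (hx1 : x < 1) {r : ℝ} (h0 : 0 ≤ r) (h1 : r ≤ 1) :
    HasDerivAt (Phi u x) ((1 - u) * (1 + r ^ 2) / (1 - u * r ^ 2) ^ 2) r := by
  have hr2 : r ^ 2 ≤ 1 := by nlinarith
  have hur : u * r ^ 2 < 1 := by nlinarith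
  have hpos : (0:ℝ) < 1 - u * r ^ 2 := by linarith
  have hne : (1:ℝ) - u * r ^ 2 ≠ 0 := hpos.ne'
  have hd : HasDerivAt (fun r : ℝ => 1 - u * r ^ 2) (-(u * (2 * r))) r := by
    have := ((hasDerivAt_pow 2 r).const_mul u).const_sub 1
    simpa using this
  have d1 : HasDerivAt (fun r : ℝ => r / (1 - u * r ^ 2))
      ((1 + u * r ^ 2) / (1 - u * r ^ 2) ^ 2) r := by
    have := (hasDerivAt_id r).div hd hne
    refine this.congr_deriv ?_
    field_simp
    rw [id_eq]; ring
  have hxr1 : x * r < 1 := by nlinarith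
  have hxrm : (-1:ℝ) < x * r := by nlinarith
  have d2 : HasDerivAt (fun r : ℝ => atanh (x * r) / x) (1 / (1 - u * r ^ 2)) r := by
    have h := ((hasDerivAt_atanh hxrm hxr1).comp r
      ((hasDerivAt_id r).const_mul x)).div_const x
    refine h.congr_deriv ?_
    have e : 1 - (x * r) ^ 2 = 1 - u * r ^ 2 := by rw [mul_pow, hx2]
    rw [e]
    field_simp
  have h := ((d1.const_mul ((u + 1) / (2 * u))).add
    (d2.const_mul ((u - 1) / (2 * u)))).const_mul (1 - u)
  refine h.congr_deriv ?_
  field_simp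
  ring

lemma Phi_one_le {u x : ℝ} (hu0 : 0 < u) (hu1 : u < 1) (hx2 : x ^ 2 = u)
    (hx0 : 0 < x) (hx1 : x < 1) : Phi u x 1 ≤ 4 / 3 := by
  have hP := atanh_lower hx0.le hx1
  have h1u : (0:ℝ) < 1 - u := by linarith
  have hkey : Phi u x 1 = (u + 1) / (2 * u) - (1 - u) ^ 2 / (2 * u * x) * atanh x := by
    unfold Phi
    rw [mul_one]
    field_simp
    ring
  rw [hkey]
  have hc : 0 < (1 - u) ^ 2 / (2 * u * x) := by positivity
  have step1 : (u + 1) / (2 * u) - (1 - u) ^ 2 / (2 * u * x) * atanh x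
      ≤ (u + 1) / (2 * u) - (1 - u) ^ 2 / (2 * u * x) *
          (x + x ^ 3 / 3 + x ^ 5 / 5 + x ^ 7 / 7) := by
    have := mul_le_mul_of_nonneg_left hP hc.le
    linarith
  refine le_trans step1 ?_
  subst hx2
  have key : 4 / 3 - ((x ^ 2 + 1) / (2 * x ^ 2) - (1 - x ^ 2) ^ 2 / (2 * x ^ 2 * x) *
      (x + x ^ 3 / 3 + x ^ 5 / 5 + x ^ 7 / 7))
      = ((8/5) * x ^ 5 + (8/35) * x ^ 7 - (9/35) * x ^ 9 + (3/7) * x ^ 11) / (6 * x ^ 3) := by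
    field_simp
    ring
  have hnum : 0 ≤ (8/5) * x ^ 5 + (8/35) * x ^ 7 - (9/35) * x ^ 9 + (3/7) * x ^ 11 := by
    have h95 : x ^ 9 ≤ x ^ 5 := pow_le_pow_of_le_one hx0.le hx1.le (by norm_num)
    nlinarith [pow_nonneg hx0.le 5, pow_nonneg hx0.le 7, pow_nonneg hx0.le 11]
  nlinarith [key, div_nonneg hnum (by positivity : (0:ℝ) ≤ 6 * x ^ 3)]

/-- Case `0 < u < 1` of the 1D bound. -/
lemma oneD_pos {u : ℝ} (hu0 : 0 < u) (hu1 : u < 1) :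
    (∫⁻ t in Ioi (0:ℝ), ENNReal.ofReal (Wfun u t)) ≤ ENNReal.ofReal (4 / 3) := by
  set x := Real.sqrt u with hx
  have hx0 : 0 < x := Real.sqrt_pos.mpr hu0
  have hx2 : x ^ 2 = u := Real.sq_sqrt hu0.le
  have hx1 : x < 1 := by nlinarith
  have h1u : (0:ℝ) < 1 - u := by linarith
  apply lintegral_of_primitive u (fun t => -Phi u x (rho ((1 - u) * t))) 0
  · intro t ht
    have hL0 : 0 ≤ (1 - u) * t := mul_nonneg h1u.le ht
    have hr0 : 0 < rho ((1 - u) * t) := rho_pos _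
    have hr1 : rho ((1 - u) * t) ≤ 1 := rho_le_one hL0
    have hρcomp := hasDerivAt_rho_comp u t
    have hΦ := hasDerivAt_Phi hu0 hu1 hx2 hx0 hx1 hr0.le hr1
    have h := (hΦ.comp t hρcomp).neg
    refine h.congr_deriv ?_
    unfold Wfun
    have hrr2 : rho ((1 - u) * t) ^ 2 ≤ 1 := by nlinarith
    have hur : u * rho ((1 - u) * t) ^ 2 < 1 := by nlinarith
    have hpos : (0:ℝ) < 1 - u * rho ((1 - u) * t) ^ 2 := by linarith
    have hden : (0:ℝ) < 1 + rho ((1 - u) * t) ^ 2 := by positivity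
    field_simp
  · have hL : Tendsto (fun t : ℝ => (1 - u) * t) atTop atTop :=
      Tendsto.const_mul_atTop h1u tendsto_id
    have hρ0 : Tendsto (fun t : ℝ => rho ((1 - u) * t)) atTop (𝓝 0) :=
      rho_tendsto.comp hL
    have hΦcont : ContinuousAt (Phi u x) 0 :=
      (hasDerivAt_Phi hu0 hu1 hx2 hx0 hx1 le_rfl zero_le_one).continuousAt
    have := (hΦcont.tendsto.comp hρ0).neg
    rw [Phi_zero] at this
    simpa using this
  · simp only [mul_zero, rho_zero, zero_sub, neg_neg]
    exact Phi_one_le hu0 hu1 hx2 hx0 hx1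


lemma oneD {u : ℝ} (hu0 : 0 ≤ u) (hu1 : u < 1) :
    (∫⁻ t in Ioi (0:ℝ), ENNReal.ofReal (Wfun u t)) ≤ ENNReal.ofReal (4 / 3) := by
  rcases eq_or_lt_of_le hu0 with h | h
  · subst h
    exact oneD_zero
  · exact oneD_pos h hu1

end SingAux

open Set
open scoped ENNReal NNReal

/-- For every `z ∈ 𝔻`, `∫_𝔻 (1-|ζ|²)/(|z-ζ||1-ζ̄z|) dA(ζ) ≤ 4/3`. -/
theorem integral_singular_le (z : ℂ) (hz : z ∈ ball (0 : ℂ) 1) :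
    (∫⁻ ζ, ENNReal.ofReal ((1 - ‖ζ‖ ^ 2) /
        (‖z - ζ‖ * ‖1 - (starRingEnd ℂ) ζ * z‖)) ∂dA) ≤
      ENNReal.ofReal (4 / 3) := by
  have hu1 : Complex.normSq z < 1 := by
    have h : ‖z‖ < 1 := by
      simpa using mem_ball_zero_iff.mp hz
    rw [← Complex.sq_norm]
    nlinarith [norm_nonneg z]
  have hu0 : 0 ≤ Complex.normSq z := Complex.normSq_nonneg z
  rw [dA, lintegral_smul_measure]
  have hFmeas : Measurable (fun ζ : ℂ => (1 - ‖ζ‖ ^ 2) /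
      (‖z - ζ‖ * ‖1 - (starRingEnd ℂ) ζ * z‖)) := by
    apply Measurable.div
    · exact (continuous_const.sub (continuous_norm.pow 2)).measurable
    · exact ((continuous_norm.comp (continuous_const.sub continuous_id)).mul
        (continuous_norm.comp (continuous_const.sub
          ((Complex.continuous_conj).mul continuous_const)))).measurable
  have hFnn : 0 ≤ᵐ[volume.restrict (ball (0:ℂ) 1)] (fun ζ : ℂ => (1 - ‖ζ‖ ^ 2) /
      (‖z - ζ‖ * ‖1 - (starRingEnd ℂ) ζ * z‖)) := by
    filter_upwards [ae_restrict_mem measurableSet_ball] with ζ hζ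
    have h : ‖ζ‖ < 1 := by
      simpa using mem_ball_zero_iff.mp hζ
    have h2 : (0:ℝ) ≤ 1 - ‖ζ‖ ^ 2 := by nlinarith [norm_nonneg ζ]
    positivity
  rw [lintegral_eq_lintegral_meas_lt _ hFnn hFmeas.aemeasurable]
  have hWmeas : Measurable (SingAux.Wfun (Complex.normSq z)) := by
    unfold SingAux.Wfun
    apply Measurable.div
    · exact (((SingAux.continuous_rho.comp (continuous_const.mul continuous_id)).pow 2).mul
        continuous_const).measurable
    · exact ((continuous_const.sub (continuous_const.mul
        ((SingAux.continuous_rho.comp (continuous_const.mul continuous_id)).pow 2))).pow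
          2).measurable
  have hbound : (∫⁻ t in Ioi (0:ℝ), (volume.restrict (ball (0:ℂ) 1))
        {a : ℂ | t < (1 - ‖a‖ ^ 2) /
          (‖z - a‖ * ‖1 - (starRingEnd ℂ) a * z‖)})
      ≤ ∫⁻ t in Ioi (0:ℝ),
          (NNReal.pi : ℝ≥0∞) * ENNReal.ofReal (SingAux.Wfun (Complex.normSq z) t) := by
    apply setLIntegral_mono ((ENNReal.measurable_ofReal.comp hWmeas).const_mul _)
    intro t ht
    have ht0 : 0 < t := mem_Ioi.mp ht
    rw [Measure.restrict_apply' measurableSet_ball]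
    refine le_trans (measure_mono (SingAux.key_subset z hu1 ht0)) ?_
    rw [Complex.volume_ball]
    set ρ := SingAux.rho ((1 - Complex.normSq z) * t) with hρ
    have hρ0 : 0 < ρ := SingAux.rho_pos _
    have hρ1 : ρ ≤ 1 := SingAux.rho_le_one (by nlinarith)
    have hρ2 : ρ ^ 2 ≤ 1 := by nlinarith
    have hD : 0 < 1 - Complex.normSq z * ρ ^ 2 := by
      nlinarith [mul_le_mul_of_nonneg_left hρ2 hu0]
    have hR0 : (0:ℝ) ≤ ρ * (1 - Complex.normSq z) / (1 - Complex.normSq z * ρ ^ 2) := by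
      have : (0:ℝ) ≤ 1 - Complex.normSq z := by linarith
      positivity
    rw [← ENNReal.ofReal_pow hR0]
    have hWe : (ρ * (1 - Complex.normSq z) / (1 - Complex.normSq z * ρ ^ 2)) ^ 2
        = SingAux.Wfun (Complex.normSq z) t := by
      unfold SingAux.Wfun
      rw [div_pow, mul_pow]
    rw [hWe, mul_comm]
    exact le_rfl
  calc ENNReal.ofReal (1 / Real.pi) * ∫⁻ t in Ioi (0:ℝ), (volume.restrict (ball (0:ℂ) 1))
        {a : ℂ | t < (1 - ‖a‖ ^ 2) /
          (‖z - a‖ * ‖1 - (starRingEnd ℂ) a * z‖)}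
      ≤ ENNReal.ofReal (1 / Real.pi) * ∫⁻ t in Ioi (0:ℝ),
          (NNReal.pi : ℝ≥0∞) * ENNReal.ofReal (SingAux.Wfun (Complex.normSq z) t) :=
        mul_le_mul_right hbound _
    _ = ENNReal.ofReal (1 / Real.pi) * ((NNReal.pi : ℝ≥0∞) *
          ∫⁻ t in Ioi (0:ℝ), ENNReal.ofReal (SingAux.Wfun (Complex.normSq z) t)) := by
        rw [lintegral_const_mul' _ _ ENNReal.coe_ne_top]
    _ ≤ ENNReal.ofReal (1 / Real.pi) * ((NNReal.pi : ℝ≥0∞) * ENNReal.ofReal (4 / 3)) := by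
        gcongr
        exact SingAux.oneD hu0 hu1
    _ = ENNReal.ofReal (4 / 3) := by
        rw [← mul_assoc]
        have hπ : ENNReal.ofReal (1 / Real.pi) * (NNReal.pi : ℝ≥0∞) = 1 := by
          rw [← ENNReal.ofReal_coe_nnreal, NNReal.coe_real_pi,
            ← ENNReal.ofReal_mul (by positivity), one_div,
            inv_mul_cancel₀ Real.pi_ne_zero, ENNReal.ofReal_one]
        rw [hπ, one_mul]
end

section
/- For every z ∈ 𝔻, ∫_𝔻 log|(1−conj(ζ)z)/(z−ζ)|² dA(ζ) = 1 − |z|². -/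
open MeasureTheory Complex Metric

open Set intervalIntegral



lemma cont_log_abs {g : ℝ → ℂ} (hg : Continuous g) (h : ∀ θ, g θ ≠ 0) :
    Continuous fun θ => Real.log (‖g θ‖) := by
  rw [continuous_iff_continuousAt]
  intro θ
  exact (Real.continuousAt_log (by simp [h θ])).comp
    ((continuous_norm.comp hg).continuousAt)

lemma one_sub_ne {w ζ : ℂ} (hw : ‖w‖ < 1) (hζ : ‖ζ‖ ≤ 1) :
    1 - w * ζ ≠ 0 := by
  intro h
  have h1 : w * ζ = 1 := by linear_combination -h
  have := norm_mul w ζ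
  rw [h1] at this
  simp at this
  nlinarith [norm_nonneg ζ, norm_nonneg w]

lemma ang {w : ℂ} (hw : ‖w‖ < 1) :
    (∫ θ in (0:ℝ)..(2*Real.pi),
      Real.log (‖1 - w * Complex.exp ((θ:ℂ) * Complex.I)‖)) = 0 := by
  set f : ℂ → ℂ := fun ζ => Complex.log (1 - w * ζ) with hf
  have hslit : ∀ ζ : ℂ, ‖ζ‖ ≤ 1 → 1 - w * ζ ∈ Complex.slitPlane := by
    intro ζ hζ
    refine Complex.mem_slitPlane_iff.2 (Or.inl ?_)
    have h1 : ‖w * ζ‖ < 1 := by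
      rw [norm_mul]
      nlinarith [norm_nonneg ζ, norm_nonneg w]
    have h2 : (w * ζ).re ≤ ‖w * ζ‖ := Complex.re_le_norm _
    simp only [Complex.sub_re, Complex.one_re]
    linarith
  have hdiff : DifferentiableOn ℂ f (closure (ball (0:ℂ) 1)) := by
    intro ζ hζ
    rw [closure_ball (0:ℂ) one_ne_zero, mem_closedBall, dist_zero_right] at hζ
    have : DifferentiableAt ℂ f ζ := by
      apply DifferentiableAt.comp (f := fun ζ => 1 - w * ζ) (g := Complex.log)
      · exact Complex.differentiableAt_log (hslit ζ hζ)
      · fun_prop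
    exact this.differentiableWithinAt
  have key := hdiff.diffContOnCl.circleIntegral_sub_inv_smul (mem_ball_self one_pos)
  have hf0 : f 0 = 0 := by simp [hf]
  rw [hf0, smul_zero] at key
  rw [circleIntegral] at key
  have hcm : ∀ θ : ℝ, circleMap 0 1 θ = Complex.exp ((θ:ℂ) * Complex.I) := by
    intro θ; simp [circleMap]
  have hint : ∀ θ : ℝ, deriv (circleMap 0 1) θ • ((circleMap 0 1 θ - 0)⁻¹ • f (circleMap 0 1 θ))
      = Complex.I * f (Complex.exp ((θ:ℂ) * Complex.I)) := by
    intro θ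
    rw [deriv_circleMap, hcm θ]
    have he : Complex.exp ((θ:ℂ) * Complex.I) ≠ 0 := Complex.exp_ne_zero _
    field_simp [smul_eq_mul]
    rw [smul_eq_mul, smul_eq_mul, sub_zero, one_div, ← mul_assoc, mul_assoc Complex.I,
      mul_inv_cancel₀ he, mul_one]
  rw [intervalIntegral.integral_congr (g := fun θ => Complex.I * f (Complex.exp ((θ:ℂ) * Complex.I)))
    (fun θ _ => hint θ)] at key
  rw [intervalIntegral.integral_const_mul] at key
  have key2 : (∫ θ in (0:ℝ)..(2*Real.pi), f (Complex.exp ((θ:ℂ) * Complex.I))) = 0 := by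
    rcases mul_eq_zero.1 key with h | h
    · exact absurd h Complex.I_ne_zero
    · exact h
  have habs : ∀ θ : ℝ, ‖Complex.exp ((θ:ℂ) * Complex.I)‖ ≤ 1 := by
    intro θ; rw [Complex.norm_exp_ofReal_mul_I]
  have hcont : Continuous fun θ : ℝ => f (Complex.exp ((θ:ℂ) * Complex.I)) := by
    rw [continuous_iff_continuousAt]
    intro θ
    have hin : ContinuousAt (fun θ : ℝ => 1 - w * Complex.exp ((θ:ℂ) * Complex.I)) θ := by
      fun_prop
    exact ContinuousAt.comp (g := Complex.log)
      (f := fun θ : ℝ => 1 - w * Complex.exp ((θ:ℂ) * Complex.I))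
      (continuousAt_clog (hslit _ (habs θ))) hin
  have := Complex.reCLM.intervalIntegral_comp_comm
    (hcont.intervalIntegrable (μ := volume) 0 (2*Real.pi))
  rw [key2] at this
  simp only [map_zero] at this
  refine Eq.trans (intervalIntegral.integral_congr (g := fun θ : ℝ =>
    Complex.reCLM (f (Complex.exp ((θ:ℂ) * Complex.I)))) ?_) this
  intro θ _
  simp only [Complex.reCLM_apply, hf, Complex.log_re]


lemma ang' {w : ℂ} (hw : ‖w‖ < 1) :
    (∫ θ in (-Real.pi)..Real.pi,
      Real.log (‖1 - w * Complex.exp ((θ:ℂ) * Complex.I)‖)) = 0 := by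
  have hper : Function.Periodic
      (fun θ : ℝ => Real.log (‖1 - w * Complex.exp ((θ:ℂ) * Complex.I)‖))
      (2 * Real.pi) := by
    intro θ
    have : Complex.exp ((↑(θ + 2 * Real.pi):ℂ) * Complex.I)
        = Complex.exp ((θ:ℂ) * Complex.I) := by
      push_cast
      rw [add_mul, Complex.exp_add, Complex.exp_two_pi_mul_I, mul_one]
    simp only [this]
  have h := hper.intervalIntegral_add_eq (-Real.pi) 0
  simp only [zero_add] at h
  rw [show -Real.pi + 2 * Real.pi = Real.pi by ring] at h
  rw [h]
  exact ang hw

lemma ang_neg {w : ℂ} (hw : ‖w‖ < 1) :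
    (∫ θ in (-Real.pi)..Real.pi,
      Real.log (‖1 - w * Complex.exp (-(θ:ℂ) * Complex.I)‖)) = 0 := by
  have h := intervalIntegral.integral_comp_neg (a := -Real.pi) (b := Real.pi)
    (fun θ : ℝ => Real.log (‖1 - w * Complex.exp ((θ:ℂ) * Complex.I)‖))
  rw [neg_neg] at h
  rw [← ang' hw, ← h]
  apply intervalIntegral.integral_congr
  intro θ _
  push_cast
  ring_nf

lemma abs_exp_I (θ : ℝ) : ‖Complex.exp ((θ:ℂ) * Complex.I)‖ = 1 :=
  Complex.norm_exp_ofReal_mul_I θ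

lemma abs_exp_neg_I (θ : ℝ) : ‖Complex.exp (-(θ:ℂ) * Complex.I)‖ = 1 := by
  rw [show -(θ:ℂ) = ((-θ:ℝ):ℂ) by push_cast; ring]
  exact Complex.norm_exp_ofReal_mul_I _

lemma angB {z : ℂ} {r : ℝ} (hr0 : 0 < r) (hrz : r ≠ ‖z‖) :
    (∫ θ in (-Real.pi)..Real.pi,
        Real.log (‖z - (r:ℂ) * Complex.exp ((θ:ℂ) * Complex.I)‖))
      = 2 * Real.pi * Real.log (max r (‖z‖)) := by
  rcases lt_or_gt_of_ne hrz with hlt | hgt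
  · -- r < |z| : factor out z
    have hz0 : z ≠ 0 := by
      intro h; rw [h] at hlt; simp at hlt; linarith
    set w : ℂ := (r:ℂ) / z with hwdef
    have hw : ‖w‖ < 1 := by
      rw [hwdef, norm_div, Complex.norm_real, Real.norm_eq_abs, abs_of_pos hr0, div_lt_one]
      · exact hlt
      · exact (norm_pos_iff.mpr hz0)
    have h2ne : ∀ θ : ℝ, ‖1 - w * Complex.exp ((θ:ℂ) * Complex.I)‖ ≠ 0 :=
      fun θ => (norm_ne_zero_iff.mpr (one_sub_ne hw (le_of_eq (abs_exp_I θ))))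
    have hpt : ∀ θ : ℝ, Real.log (‖z - (r:ℂ) * Complex.exp ((θ:ℂ) * Complex.I)‖)
        = Real.log (‖z‖)
          + Real.log (‖1 - w * Complex.exp ((θ:ℂ) * Complex.I)‖) := by
      intro θ
      have hfac : z - (r:ℂ) * Complex.exp ((θ:ℂ) * Complex.I)
          = z * (1 - w * Complex.exp ((θ:ℂ) * Complex.I)) := by
        rw [hwdef]; field_simp
      rw [hfac, norm_mul, Real.log_mul ((norm_ne_zero_iff.mpr hz0)) (h2ne θ)]
    rw [intervalIntegral.integral_congr (g := fun θ : ℝ => Real.log (‖z‖)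
      + Real.log (‖1 - w * Complex.exp ((θ:ℂ) * Complex.I)‖))
      (fun θ _ => hpt θ)]
    have hcont2 : Continuous fun θ : ℝ =>
        Real.log (‖1 - w * Complex.exp ((θ:ℂ) * Complex.I)‖) :=
      cont_log_abs (by fun_prop) (fun θ => one_sub_ne hw (le_of_eq (abs_exp_I θ)))
    rw [intervalIntegral.integral_add (intervalIntegrable_const)
      (hcont2.intervalIntegrable (μ := volume) _ _), intervalIntegral.integral_const,
      ang' hw, max_eq_right hlt.le, smul_eq_mul]
    ring
  · -- |z| < r : factor out -r e^{iθ}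
    have hrne : (r:ℂ) ≠ 0 := by exact_mod_cast hr0.ne'
    set w : ℂ := z / (r:ℂ) with hwdef
    have hw : ‖w‖ < 1 := by
      rw [hwdef, norm_div, Complex.norm_real, Real.norm_eq_abs, abs_of_pos hr0, div_lt_one hr0]
      exact hgt
    have h2ne : ∀ θ : ℝ, ‖1 - w * Complex.exp (-(θ:ℂ) * Complex.I)‖ ≠ 0 :=
      fun θ => (norm_ne_zero_iff.mpr (one_sub_ne hw (le_of_eq (abs_exp_neg_I θ))))
    have hpt : ∀ θ : ℝ, Real.log (‖z - (r:ℂ) * Complex.exp ((θ:ℂ) * Complex.I)‖)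
        = Real.log r
          + Real.log (‖1 - w * Complex.exp (-(θ:ℂ) * Complex.I)‖) := by
      intro θ
      have hee : Complex.exp ((θ:ℂ) * Complex.I) * Complex.exp (-((θ:ℂ) * Complex.I)) = 1 := by
        rw [← Complex.exp_add, show (θ:ℂ) * Complex.I + -((θ:ℂ) * Complex.I) = 0 by ring,
          Complex.exp_zero]
      have hfac : z - (r:ℂ) * Complex.exp ((θ:ℂ) * Complex.I)
          = (-Complex.exp ((θ:ℂ) * Complex.I))
            * ((r:ℂ) * (1 - w * Complex.exp (-(θ:ℂ) * Complex.I))) := by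
        rw [hwdef, show -(θ:ℂ) * Complex.I = -((θ:ℂ) * Complex.I) from by ring]
        field_simp
        linear_combination (-z) * hee
      rw [hfac, norm_mul, norm_mul, norm_neg, abs_exp_I, one_mul, Complex.norm_real, Real.norm_eq_abs,
        abs_of_pos hr0, Real.log_mul hr0.ne' (h2ne θ)]
    rw [intervalIntegral.integral_congr (g := fun θ : ℝ => Real.log r
      + Real.log (‖1 - w * Complex.exp (-(θ:ℂ) * Complex.I)‖))
      (fun θ _ => hpt θ)]
    have hcont2 : Continuous fun θ : ℝ =>
        Real.log (‖1 - w * Complex.exp (-(θ:ℂ) * Complex.I)‖) :=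
      cont_log_abs (by fun_prop) (fun θ => one_sub_ne hw (le_of_eq (abs_exp_neg_I θ)))
    rw [intervalIntegral.integral_add (intervalIntegrable_const)
      (hcont2.intervalIntegrable (μ := volume) _ _), intervalIntegral.integral_const,
      ang_neg hw, max_eq_left hgt.le, smul_eq_mul]
    ring


lemma hasDerivAt_H {r : ℝ} (hr : 0 < r) :
    HasDerivAt (fun x : ℝ => x^2/2 * Real.log x - x^2/4) (r * Real.log r) r := by
  have hp : HasDerivAt (fun x : ℝ => x^2/2) r r := by
    simpa using (hasDerivAt_pow 2 r).div_const 2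
  have hq : HasDerivAt (fun x : ℝ => x^2/4) (r/2) r := by
    have : (2:ℝ) * r / 4 = r / 2 := by ring
    simpa [this] using (hasDerivAt_pow 2 r).div_const 4
  have h : HasDerivAt (fun x : ℝ => x^2/2 * Real.log x - x^2/4)
      (r * Real.log r + r ^ 2 / 2 * r⁻¹ - r / 2) r := (hp.mul (Real.hasDerivAt_log hr.ne')).sub hq
  convert h using 1
  field_simp
  ring

lemma rlogr_le {r : ℝ} (h0 : 0 < r) (h1 : r ≤ 1) : |r * Real.log r| ≤ 1 := by
  have hlog : Real.log r ≤ 0 := Real.log_nonpos h0.le h1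
  have hle : -Real.log r ≤ r⁻¹ - 1 := by
    have := Real.add_one_le_exp (-Real.log r)
    have h2 : Real.log r⁻¹ ≤ r⁻¹ - 1 := by
      have := Real.log_le_sub_one_of_pos (inv_pos.2 h0)
      linarith
    rwa [Real.log_inv] at h2
  rw [abs_mul, abs_of_pos h0, abs_of_nonpos hlog]
  calc r * -Real.log r ≤ r * (r⁻¹ - 1) := by nlinarith
    _ = 1 - r := by field_simp
    _ ≤ 1 := by linarith

lemma int_rlogr : IntervalIntegrable (fun r : ℝ => r * Real.log r) volume 0 1 := by
  rw [intervalIntegrable_iff_integrableOn_Ioc_of_le zero_le_one]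
  apply Measure.integrableOn_of_bounded (M := 1) measure_Ioc_lt_top.ne
  · exact (measurable_id.mul Real.measurable_log).aestronglyMeasurable
  · filter_upwards [ae_restrict_mem measurableSet_Ioc] with r hr
    rw [Real.norm_eq_abs]
    exact rlogr_le hr.1 hr.2

lemma radial0 : (∫ r in (0:ℝ)..1, r * Real.log r) = -(1/4) := by
  have hderiv : ∀ x ∈ Ioo (0:ℝ) 1,
      HasDerivAt (fun x : ℝ => x^2/2 * Real.log x - x^2/4) (x * Real.log x) x :=
    fun x hx => hasDerivAt_H hx.1
  have h0 : Filter.Tendsto (fun x : ℝ => x^2/2 * Real.log x - x^2/4)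
      (nhdsWithin 0 (Ioi 0)) (nhds 0) := by
    have h1 := tendsto_log_mul_rpow_nhdsGT_zero (by norm_num : (0:ℝ) < 2)
    have h1' : Filter.Tendsto (fun x : ℝ => x^2/2 * Real.log x)
        (nhdsWithin 0 (Ioi 0)) (nhds 0) := by
      have : Filter.Tendsto (fun x : ℝ => Real.log x * x ^ (2:ℝ) / 2)
          (nhdsWithin 0 (Ioi 0)) (nhds 0) := by simpa using h1.div_const 2
      refine this.congr' ?_
      filter_upwards [self_mem_nhdsWithin] with x hx
      rw [show x ^ (2:ℝ) = x ^ (2:ℕ) from Real.rpow_natCast x 2]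
      ring
    have h2 : Filter.Tendsto (fun x : ℝ => x^2/4) (nhdsWithin 0 (Ioi 0)) (nhds 0) := by
      have : Filter.Tendsto (fun x : ℝ => x^2/4) (nhds 0) (nhds 0) := by
        have := (continuous_pow 2).div_const (4:ℝ)
        simpa using this.tendsto 0
      exact this.mono_left nhdsWithin_le_nhds
    simpa using h1'.sub h2
  have h1 : Filter.Tendsto (fun x : ℝ => x^2/2 * Real.log x - x^2/4)
      (nhdsWithin 1 (Iio 1)) (nhds (-(1/4))) := by
    have hc : ContinuousAt (fun x : ℝ => x^2/2 * Real.log x - x^2/4) 1 := by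
      have hl : ContinuousAt Real.log 1 := Real.continuousAt_log one_ne_zero
      have hl' : ContinuousAt (fun x : ℝ => Real.log x) 1 := hl
      exact ((((continuous_pow 2).continuousAt (x := (1:ℝ))).div_const 2).mul hl').sub
        (((continuous_pow 2).continuousAt (x := (1:ℝ))).div_const 4)
    have ht := hc.tendsto.mono_left (nhdsWithin_le_nhds (s := Iio (1:ℝ)))
    simpa [Real.log_one] using ht
  have := intervalIntegral.integral_eq_sub_of_hasDerivAt_of_tendsto zero_lt_one
    hderiv int_rlogr h0 h1
  rw [this]; norm_num

lemma radial {a : ℝ} (ha0 : 0 ≤ a) (ha1 : a < 1) :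
    (∫ r in (0:ℝ)..1, r * Real.log (max r a)) = (a^2 - 1)/4 := by
  rcases eq_or_lt_of_le ha0 with ha | ha
  · subst_vars
    rw [intervalIntegral.integral_congr (g := fun r : ℝ => r * Real.log r) ?_]
    · rw [radial0]; norm_num
    · intro r hr
      rw [uIcc_of_le zero_le_one] at hr
      dsimp only
      rw [max_eq_left hr.1]
  · -- 0 < a
    have hfc : Continuous fun r : ℝ => r * Real.log (max r a) := by
      apply continuous_id.mul
      rw [continuous_iff_continuousAt]
      intro r
      exact ContinuousAt.comp (g := Real.log) (f := fun r : ℝ => max r a)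
        (Real.continuousAt_log (lt_of_lt_of_le ha (le_max_right r a)).ne')
        ((continuous_id.max continuous_const).continuousAt)
    have h12 := intervalIntegral.integral_add_adjacent_intervals
      (hfc.intervalIntegrable (μ := volume) 0 a) (hfc.intervalIntegrable (μ := volume) a 1)
    rw [← h12]
    have hp1 : (∫ r in (0:ℝ)..a, r * Real.log (max r a)) = a^2/2 * Real.log a := by
      rw [intervalIntegral.integral_congr (g := fun r : ℝ => r * Real.log a) ?_]
      · rw [intervalIntegral.integral_mul_const, integral_id]
        ring
      · intro r hr
        rw [uIcc_of_le ha0] at hr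
        dsimp only
        rw [max_eq_right hr.2]
    have hp2 : (∫ r in a..1, r * Real.log (max r a)) = -(1/4) - (a^2/2 * Real.log a - a^2/4) := by
      rw [intervalIntegral.integral_congr (g := fun r : ℝ => r * Real.log r) ?_]
      · have hderiv : ∀ x ∈ uIcc a 1,
            HasDerivAt (fun x : ℝ => x^2/2 * Real.log x - x^2/4) (x * Real.log x) x := by
          intro x hx
          rw [uIcc_of_le ha1.le] at hx
          exact hasDerivAt_H (lt_of_lt_of_le ha hx.1)
        have hcont : Continuous fun r : ℝ => r * Real.log (max r a) := hfc
        have hint : IntervalIntegrable (fun r : ℝ => r * Real.log r) volume a 1 := by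
          apply ContinuousOn.intervalIntegrable
          intro x hx
          rw [uIcc_of_le ha1.le] at hx
          exact (continuous_id.continuousAt.mul
            (Real.continuousAt_log (lt_of_lt_of_le ha hx.1).ne')).continuousWithinAt
        rw [intervalIntegral.integral_eq_sub_of_hasDerivAt hderiv hint]
        norm_num [Real.log_one]
      · intro r hr
        rw [uIcc_of_le ha1.le] at hr
        dsimp only
        rw [max_eq_left hr.1]
    rw [hp1, hp2]
    ring


lemma conj_exp_I (θ : ℝ) : (starRingEnd ℂ) (Complex.exp ((θ:ℂ) * Complex.I))
    = Complex.exp (-(θ:ℂ) * Complex.I) := by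
  rw [← Complex.exp_conj]
  congr 1
  simp [map_mul, Complex.conj_ofReal, Complex.conj_I]

lemma sub_exp_ne {z : ℂ} {r : ℝ} (hr0 : 0 < r) (hrz : r ≠ ‖z‖) (θ : ℝ) :
    z - (r:ℂ) * Complex.exp ((θ:ℂ) * Complex.I) ≠ 0 := by
  intro h
  apply hrz
  have hzeq : z = (r:ℂ) * Complex.exp ((θ:ℂ) * Complex.I) := by linear_combination h
  rw [hzeq, norm_mul, abs_exp_I, Complex.norm_real, Real.norm_eq_abs, abs_of_pos hr0, mul_one]

lemma abs_rz_lt {z : ℂ} {r : ℝ} (hr0 : 0 ≤ r) (hr1 : r < 1) (hz : ‖z‖ < 1) :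
    ‖(r:ℂ) * z‖ < 1 := by
  rw [norm_mul, Complex.norm_real, Real.norm_eq_abs, _root_.abs_of_nonneg hr0]
  nlinarith [norm_nonneg z]

lemma pointwise_split {z : ℂ} (hz : ‖z‖ < 1) {r : ℝ} (hr0 : 0 < r) (hr1 : r < 1)
    (hrz : r ≠ ‖z‖) (θ : ℝ) :
    Real.log ((‖1 - (starRingEnd ℂ) ((r:ℂ) * Complex.exp ((θ:ℂ) * Complex.I)) * z‖)^2
        / (‖z - (r:ℂ) * Complex.exp ((θ:ℂ) * Complex.I)‖)^2)
      = 2 * Real.log (‖1 - ((r:ℂ) * z) * Complex.exp (-(θ:ℂ) * Complex.I)‖)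
        - 2 * Real.log (‖z - (r:ℂ) * Complex.exp ((θ:ℂ) * Complex.I)‖) := by
  have harg : (starRingEnd ℂ) ((r:ℂ) * Complex.exp ((θ:ℂ) * Complex.I)) * z
      = ((r:ℂ) * z) * Complex.exp (-(θ:ℂ) * Complex.I) := by
    rw [map_mul, conj_exp_I, Complex.conj_ofReal]
    ring
  rw [harg]
  have hA : ‖1 - ((r:ℂ) * z) * Complex.exp (-(θ:ℂ) * Complex.I)‖ ≠ 0 :=
    (norm_ne_zero_iff.mpr (one_sub_ne (abs_rz_lt hr0.le hr1 hz) (le_of_eq (abs_exp_neg_I θ))))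
  have hW : ‖z - (r:ℂ) * Complex.exp ((θ:ℂ) * Complex.I)‖ ≠ 0 :=
    (norm_ne_zero_iff.mpr (sub_exp_ne hr0 hrz θ))
  rw [Real.log_div (pow_ne_zero 2 hA) (pow_ne_zero 2 hW), Real.log_pow, Real.log_pow]
  push_cast
  ring

lemma inner_val {z : ℂ} (hz : ‖z‖ < 1) {r : ℝ} (hr0 : 0 < r) (hr1 : r < 1)
    (hrz : r ≠ ‖z‖) :
    (∫ θ in Ioo (-Real.pi) Real.pi,
        r * Real.log ((‖1 - (starRingEnd ℂ)
            ((r:ℂ) * Complex.exp ((θ:ℂ) * Complex.I)) * z‖)^2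
          / (‖z - (r:ℂ) * Complex.exp ((θ:ℂ) * Complex.I)‖)^2))
      = r * (-4 * Real.pi * Real.log (max r (‖z‖))) := by
  have hle : -Real.pi ≤ Real.pi := by linarith [Real.pi_pos]
  rw [← MeasureTheory.integral_Ioc_eq_integral_Ioo, ← intervalIntegral.integral_of_le hle,
    intervalIntegral.integral_const_mul]
  congr 1
  rw [intervalIntegral.integral_congr (g := fun θ : ℝ =>
    2 * Real.log (‖1 - ((r:ℂ) * z) * Complex.exp (-(θ:ℂ) * Complex.I)‖)
      - 2 * Real.log (‖z - (r:ℂ) * Complex.exp ((θ:ℂ) * Complex.I)‖))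
    (fun θ _ => pointwise_split hz hr0 hr1 hrz θ)]
  have hcA : Continuous fun θ : ℝ =>
      Real.log (‖1 - ((r:ℂ) * z) * Complex.exp (-(θ:ℂ) * Complex.I)‖) :=
    cont_log_abs (by fun_prop)
      (fun θ => one_sub_ne (abs_rz_lt hr0.le hr1 hz) (le_of_eq (abs_exp_neg_I θ)))
  have hcW : Continuous fun θ : ℝ =>
      Real.log (‖z - (r:ℂ) * Complex.exp ((θ:ℂ) * Complex.I)‖) :=
    cont_log_abs (by fun_prop) (sub_exp_ne hr0 hrz)
  rw [intervalIntegral.integral_sub ((show Continuous fun θ : ℝ => (2:ℝ) * Real.log (‖1 - ((r:ℂ) * z) * Complex.exp (-(θ:ℂ) * Complex.I)‖) from continuous_const.mul hcA).intervalIntegrable (μ := volume) _ _)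
    ((show Continuous fun θ : ℝ => (2:ℝ) * Real.log (‖z - (r:ℂ) * Complex.exp ((θ:ℂ) * Complex.I)‖) from continuous_const.mul hcW).intervalIntegrable (μ := volume) _ _),
    intervalIntegral.integral_const_mul, intervalIntegral.integral_const_mul,
    ang_neg (abs_rz_lt hr0.le hr1 hz), angB hr0 hrz]
  ring



/-- `C z` is the constant in the integrand bound. -/
noncomputable def Cz (z : ℂ) : ℝ :=
  2 * (|Real.log (1 - ‖z‖)| + Real.log 2) + 4 * Real.log 2

lemma Cz_nonneg {z : ℂ} (hz : ‖z‖ < 1) : 0 ≤ Cz z := by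
  have := abs_nonneg (Real.log (1 - ‖z‖))
  have := Real.log_nonneg (by norm_num : (1:ℝ) ≤ 2)
  unfold Cz; linarith

lemma hsymm (p : ℝ × ℝ) :
    Complex.polarCoord.symm p = (p.1:ℂ) * Complex.exp ((p.2:ℂ) * Complex.I) := by
  rw [Complex.polarCoord_symm_apply, Complex.exp_mul_I]
  simp [Complex.ofReal_cos, Complex.ofReal_sin]

lemma meas_f (z : ℂ) : Measurable (fun p : ℝ × ℝ =>
    p.1 * Real.log ((‖1 - (starRingEnd ℂ)
        ((p.1:ℂ) * Complex.exp ((p.2:ℂ) * Complex.I)) * z‖)^2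
      / (‖z - (p.1:ℂ) * Complex.exp ((p.2:ℂ) * Complex.I)‖)^2)) := by
  have hψ : Continuous (fun p : ℝ × ℝ => (p.1:ℂ) * Complex.exp ((p.2:ℂ) * Complex.I)) := by
    fun_prop
  have hnum : Continuous (fun p : ℝ × ℝ => (‖1 - (starRingEnd ℂ)
      ((p.1:ℂ) * Complex.exp ((p.2:ℂ) * Complex.I)) * z‖)^2) := by
    apply Continuous.pow
    apply continuous_norm.comp
    exact continuous_const.sub ((continuous_conj.comp hψ).mul continuous_const)
  have hden : Continuous (fun p : ℝ × ℝ => (‖z - (p.1:ℂ) * Complex.exp ((p.2:ℂ) * Complex.I)‖)^2) := by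
    apply Continuous.pow
    exact continuous_norm.comp (continuous_const.sub hψ)
  exact measurable_fst.mul
    (Real.measurable_log.comp (hnum.measurable.div hden.measurable))

lemma slice_cont {z : ℂ} (hz : ‖z‖ < 1) {r : ℝ} (hr0 : 0 < r) (hr1 : r < 1)
    (hrz : r ≠ ‖z‖) :
    Continuous (fun θ : ℝ =>
      r * Real.log ((‖1 - (starRingEnd ℂ)
          ((r:ℂ) * Complex.exp ((θ:ℂ) * Complex.I)) * z‖)^2
        / (‖z - (r:ℂ) * Complex.exp ((θ:ℂ) * Complex.I)‖)^2)) := by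
  have heq : (fun θ : ℝ =>
      r * Real.log ((‖1 - (starRingEnd ℂ)
          ((r:ℂ) * Complex.exp ((θ:ℂ) * Complex.I)) * z‖)^2
        / (‖z - (r:ℂ) * Complex.exp ((θ:ℂ) * Complex.I)‖)^2))
      = fun θ : ℝ => r *
        (2 * Real.log (‖1 - ((r:ℂ) * z) * Complex.exp (-(θ:ℂ) * Complex.I)‖)
          - 2 * Real.log (‖z - (r:ℂ) * Complex.exp ((θ:ℂ) * Complex.I)‖)) := by
    funext θ
    rw [pointwise_split hz hr0 hr1 hrz θ]
  rw [heq]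
  have hcA : Continuous fun θ : ℝ =>
      Real.log (‖1 - ((r:ℂ) * z) * Complex.exp (-(θ:ℂ) * Complex.I)‖) :=
    cont_log_abs (by fun_prop)
      (fun θ => one_sub_ne (abs_rz_lt hr0.le hr1 hz) (le_of_eq (abs_exp_neg_I θ)))
  have hcW : Continuous fun θ : ℝ =>
      Real.log (‖z - (r:ℂ) * Complex.exp ((θ:ℂ) * Complex.I)‖) :=
    cont_log_abs (by fun_prop) (sub_exp_ne hr0 hrz)
  exact continuous_const.mul
    ((continuous_const.mul hcA).sub (continuous_const.mul hcW))

lemma slice_int {z : ℂ} (hz : ‖z‖ < 1) {r : ℝ} (hr0 : 0 < r) (hr1 : r < 1)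
    (hrz : r ≠ ‖z‖) :
    Integrable (fun θ : ℝ =>
      r * Real.log ((‖1 - (starRingEnd ℂ)
          ((r:ℂ) * Complex.exp ((θ:ℂ) * Complex.I)) * z‖)^2
        / (‖z - (r:ℂ) * Complex.exp ((θ:ℂ) * Complex.I)‖)^2))
      (volume.restrict (Ioo (-Real.pi) Real.pi)) :=
  ((slice_cont hz hr0 hr1 hrz).integrableOn_Icc).mono_set Ioo_subset_Icc_self

lemma norm_f_le {z : ℂ} (hz : ‖z‖ < 1) {r : ℝ} (hr0 : 0 < r) (hr1 : r < 1)
    (hrz : r ≠ ‖z‖) (θ : ℝ) :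
    ‖r * Real.log ((‖1 - (starRingEnd ℂ)
          ((r:ℂ) * Complex.exp ((θ:ℂ) * Complex.I)) * z‖)^2
        / (‖z - (r:ℂ) * Complex.exp ((θ:ℂ) * Complex.I)‖)^2)‖
      ≤ r * (Cz z - 2 * Real.log (‖z - (r:ℂ) * Complex.exp ((θ:ℂ) * Complex.I)‖)) := by
  set a := ‖z‖ with ha
  have ha0 : 0 ≤ a := norm_nonneg z
  rw [pointwise_split hz hr0 hr1 hrz θ]
  set A := ‖1 - ((r:ℂ) * z) * Complex.exp (-(θ:ℂ) * Complex.I)‖ with hA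
  set W := ‖z - (r:ℂ) * Complex.exp ((θ:ℂ) * Complex.I)‖ with hW
  have habsrz : ‖((r:ℂ) * z) * Complex.exp (-(θ:ℂ) * Complex.I)‖ = r * a := by
    rw [norm_mul, norm_mul, abs_exp_neg_I, Complex.norm_real, Real.norm_eq_abs, _root_.abs_of_pos hr0, mul_one]
  have hA1 : 1 - a ≤ A := by
    have h1 := norm_sub_norm_le (1:ℂ) (((r:ℂ) * z) * Complex.exp (-(θ:ℂ) * Complex.I))
    simp only [norm_one] at h1
    rw [habsrz] at h1
    have : 1 - a ≤ 1 - r * a := by nlinarith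
    calc 1 - a ≤ 1 - r * a := this
      _ ≤ A := h1
  have hA2 : A ≤ 2 := by
    have h1 := norm_sub_le (1:ℂ) (((r:ℂ) * z) * Complex.exp (-(θ:ℂ) * Complex.I))
    simp only [norm_one] at h1
    rw [habsrz] at h1
    nlinarith
  have hA0 : 0 < A := by linarith [hz]
  have hW2 : W ≤ 2 := by
    have h1 := norm_sub_le z ((r:ℂ) * Complex.exp ((θ:ℂ) * Complex.I))
    have h2 : ‖(r:ℂ) * Complex.exp ((θ:ℂ) * Complex.I)‖ = r := by
      rw [norm_mul, abs_exp_I, Complex.norm_real, Real.norm_eq_abs, _root_.abs_of_pos hr0, mul_one]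
    rw [h2] at h1
    calc W ≤ a + r := h1
      _ ≤ 2 := by linarith
  have hW0 : 0 < W := (norm_pos_iff.mpr (sub_exp_ne hr0 hrz θ))
  have hlog2 : (0:ℝ) ≤ Real.log 2 := Real.log_nonneg (by norm_num)
  have hlogA : |Real.log A| ≤ |Real.log (1 - a)| + Real.log 2 := by
    rcases le_or_gt A 1 with h | h
    · rw [abs_of_nonpos (Real.log_nonpos hA0.le h)]
      have h2 : Real.log (1 - a) ≤ Real.log A := Real.log_le_log (by linarith) hA1
      have h3 := neg_le_abs (Real.log (1 - a))
      linarith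
    · rw [abs_of_pos (Real.log_pos h)]
      have h2 : Real.log A ≤ Real.log 2 := Real.log_le_log hA0 hA2
      have := abs_nonneg (Real.log (1 - a))
      linarith
  have hlogW : |Real.log W| ≤ 2 * Real.log 2 - Real.log W := by
    rcases le_or_gt W 1 with h | h
    · rw [abs_of_nonpos (Real.log_nonpos hW0.le h)]
      linarith
    · rw [abs_of_pos (Real.log_pos h)]
      have h2 : Real.log W ≤ Real.log 2 := Real.log_le_log hW0 hW2
      linarith
  rw [Real.norm_eq_abs, abs_mul, _root_.abs_of_pos hr0]
  apply mul_le_mul_of_nonneg_left _ hr0.le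
  calc |2 * Real.log A - 2 * Real.log W| ≤ 2 * |Real.log A| + 2 * |Real.log W| := by
        rw [show (2:ℝ) * |Real.log A| = |2 * Real.log A| by rw [abs_mul]; norm_num,
          show (2:ℝ) * |Real.log W| = |2 * Real.log W| by rw [abs_mul]; norm_num]
        exact abs_sub _ _
    _ ≤ 2 * (|Real.log (1 - a)| + Real.log 2) + 2 * (2 * Real.log 2 - Real.log W) := by
        have := mul_le_mul_of_nonneg_left hlogA (by norm_num : (0:ℝ) ≤ 2)
        have := mul_le_mul_of_nonneg_left hlogW (by norm_num : (0:ℝ) ≤ 2)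
        linarith
    _ = Cz z - 2 * Real.log W := by unfold Cz; rw [← ha]; ring

lemma int_bound {z : ℂ} (hz : ‖z‖ < 1) {r : ℝ} (hr0 : 0 < r) (hr1 : r < 1)
    (hrz : r ≠ ‖z‖) :
    ‖∫ θ in Ioo (-Real.pi) Real.pi, ‖r * Real.log ((‖1 - (starRingEnd ℂ)
        ((r:ℂ) * Complex.exp ((θ:ℂ) * Complex.I)) * z‖)^2
      / (‖z - (r:ℂ) * Complex.exp ((θ:ℂ) * Complex.I)‖)^2)‖‖
      ≤ 2 * Real.pi * Cz z + 4 * Real.pi := by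
  have hπ := Real.pi_pos
  have hle : -Real.pi ≤ Real.pi := by linarith
  have ha0 : 0 ≤ ‖z‖ := norm_nonneg z
  have hcW : Continuous fun θ : ℝ =>
      Real.log (‖z - (r:ℂ) * Complex.exp ((θ:ℂ) * Complex.I)‖) :=
    cont_log_abs (by fun_prop) (sub_exp_ne hr0 hrz)
  have hb : Continuous (fun θ : ℝ => r * (Cz z - 2 * Real.log
      (‖z - (r:ℂ) * Complex.exp ((θ:ℂ) * Complex.I)‖))) :=
    continuous_const.mul (continuous_const.sub (continuous_const.mul hcW))
  have hbint : IntegrableOn (fun θ : ℝ => r * (Cz z - 2 * Real.log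
      (‖z - (r:ℂ) * Complex.exp ((θ:ℂ) * Complex.I)‖)))
      (Ioo (-Real.pi) Real.pi) volume :=
    (hb.integrableOn_Icc).mono_set Ioo_subset_Icc_self
  have hfint := (slice_int hz hr0 hr1 hrz).norm
  have hmono := setIntegral_mono_on hfint hbint measurableSet_Ioo
    (fun θ _ => norm_f_le hz hr0 hr1 hrz θ)
  have hbval : (∫ θ in Ioo (-Real.pi) Real.pi, r * (Cz z - 2 * Real.log
      (‖z - (r:ℂ) * Complex.exp ((θ:ℂ) * Complex.I)‖)))
      = 2 * Real.pi * (r * Cz z) - 4 * Real.pi * (r * Real.log (max r (‖z‖))) := by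
    rw [← MeasureTheory.integral_Ioc_eq_integral_Ioo, ← intervalIntegral.integral_of_le hle,
      intervalIntegral.integral_const_mul,
      intervalIntegral.integral_sub intervalIntegrable_const
        ((show Continuous fun θ : ℝ => (2:ℝ) * Real.log (‖z - (r:ℂ) * Complex.exp ((θ:ℂ) * Complex.I)‖) from continuous_const.mul hcW).intervalIntegrable
          (μ := volume) _ _),
      intervalIntegral.integral_const, intervalIntegral.integral_const_mul, angB hr0 hrz,
      smul_eq_mul]
    ring
  have hnn : (0:ℝ) ≤ ∫ θ in Ioo (-Real.pi) Real.pi, ‖r * Real.log ((‖1 - (starRingEnd ℂ) ((r:ℂ) * Complex.exp ((θ:ℂ) * Complex.I)) * z‖)^2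
      / (‖z - (r:ℂ) * Complex.exp ((θ:ℂ) * Complex.I)‖)^2)‖ :=
    integral_nonneg fun θ => norm_nonneg _
  rw [Real.norm_eq_abs, _root_.abs_of_nonneg hnn]
  rw [hbval] at hmono
  have h1 : Real.log r ≤ Real.log (max r (‖z‖)) :=
    Real.log_le_log hr0 (le_max_left _ _)
  have h2 : -(r * Real.log r) ≤ 1 := by
    have := rlogr_le hr0 hr1.le
    have := neg_le_abs (r * Real.log r)
    linarith
  have h3 : -(r * Real.log (max r (‖z‖))) ≤ 1 := by nlinarith
  have hCz := Cz_nonneg hz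
  have h4 : 2 * Real.pi * (r * Cz z) ≤ 2 * Real.pi * Cz z := by
    nlinarith [mul_nonneg (mul_nonneg hπ.le (sub_nonneg.2 hr1.le)) hCz]
  have h5 : -(4 * Real.pi * (r * Real.log (max r (‖z‖)))) ≤ 4 * Real.pi := by
    nlinarith [mul_le_mul_of_nonneg_left h3 (by linarith : (0:ℝ) ≤ 4 * Real.pi)]
  linarith

lemma polar_step (z : ℂ) :
    (∫ ζ in ball (0:ℂ) 1,
        Real.log ((‖1 - (starRingEnd ℂ) ζ * z‖)^2 / (‖z - ζ‖)^2))
      = ∫ p in (Ioo (0:ℝ) 1) ×ˢ (Ioo (-Real.pi) Real.pi),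
          p.1 * Real.log ((‖1 - (starRingEnd ℂ)
            ((p.1:ℂ) * Complex.exp ((p.2:ℂ) * Complex.I)) * z‖)^2
            / (‖z - (p.1:ℂ) * Complex.exp ((p.2:ℂ) * Complex.I)‖)^2) := by
  set G : ℂ → ℝ := fun ζ =>
    Real.log ((‖1 - (starRingEnd ℂ) ζ * z‖)^2 / (‖z - ζ‖)^2) with hG
  set T : Set (ℝ × ℝ) := (Ioo (0:ℝ) 1) ×ˢ (Ioo (-Real.pi) Real.pi) with hT
  have hTmeas : MeasurableSet T := measurableSet_Ioo.prod measurableSet_Ioo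
  have hTsub : T ⊆ polarCoord.target := by
    rintro ⟨r, θ⟩ ⟨h1, h2⟩
    exact ⟨mem_Ioi.2 h1.1, h2⟩
  rw [← MeasureTheory.integral_indicator measurableSet_ball,
    ← Complex.integral_comp_polarCoord_symm (fun ζ => (ball (0:ℂ) 1).indicator G ζ)]
  have hind : ∀ p ∈ polarCoord.target,
      p.1 • (ball (0:ℂ) 1).indicator G (Complex.polarCoord.symm p)
        = T.indicator (fun p : ℝ × ℝ =>
            p.1 * G ((p.1:ℂ) * Complex.exp ((p.2:ℂ) * Complex.I))) p := by
    rintro ⟨r, θ⟩ hp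
    have hr0 : (0:ℝ) < r := hp.1
    have habs : ‖Complex.polarCoord.symm (r, θ)‖ = r := by
      rw [Complex.norm_polarCoord_symm]; exact _root_.abs_of_pos hr0
    by_cases h1 : r < 1
    · rw [indicator_of_mem (show Complex.polarCoord.symm (r, θ) ∈ ball (0:ℂ) 1 by
          rw [mem_ball, dist_zero_right, habs]; exact h1),
        indicator_of_mem (show ((r, θ) : ℝ × ℝ) ∈ T from ⟨⟨hr0, h1⟩, hp.2⟩)]
      rw [smul_eq_mul, hsymm (r, θ)]
    · rw [indicator_of_notMem (show Complex.polarCoord.symm (r, θ) ∉ ball (0:ℂ) 1 by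
          rw [mem_ball, dist_zero_right, habs]; exact h1),
        indicator_of_notMem (show ((r, θ) : ℝ × ℝ) ∉ T by
          intro hc; exact h1 hc.1.2), smul_zero]
  rw [setIntegral_congr_fun polarCoord.open_target.measurableSet hind,
    setIntegral_indicator hTmeas, inter_eq_self_of_subset_right hTsub]

lemma fubini_step (z : ℂ) (hz1 : ‖z‖ < 1) :
    (∫ p in (Ioo (0:ℝ) 1) ×ˢ (Ioo (-Real.pi) Real.pi),
        p.1 * Real.log ((‖1 - (starRingEnd ℂ)
          ((p.1:ℂ) * Complex.exp ((p.2:ℂ) * Complex.I)) * z‖)^2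
          / (‖z - (p.1:ℂ) * Complex.exp ((p.2:ℂ) * Complex.I)‖)^2))
      = Real.pi * (1 - (‖z‖)^2) := by
  have ha0 : 0 ≤ ‖z‖ := norm_nonneg z
  set μr := volume.restrict (Ioo (0:ℝ) 1) with hμr
  set μθ := volume.restrict (Ioo (-Real.pi) Real.pi) with hμθ
  set f : ℝ × ℝ → ℝ := fun p =>
    p.1 * Real.log ((‖1 - (starRingEnd ℂ)
      ((p.1:ℂ) * Complex.exp ((p.2:ℂ) * Complex.I)) * z‖)^2
      / (‖z - (p.1:ℂ) * Complex.exp ((p.2:ℂ) * Complex.I)‖)^2) with hf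
  have hrestrict : (volume : Measure (ℝ × ℝ)).restrict
      ((Ioo (0:ℝ) 1) ×ˢ (Ioo (-Real.pi) Real.pi)) = μr.prod μθ := by
    rw [hμr, hμθ, Measure.prod_restrict, ← Measure.volume_eq_prod ℝ ℝ]
  have haegood : ∀ᵐ r ∂μr, r ∈ Ioo (0:ℝ) 1 ∧ r ≠ ‖z‖ := by
    have h1 : ∀ᵐ r ∂μr, r ∈ Ioo (0:ℝ) 1 := ae_restrict_mem measurableSet_Ioo
    have h2 : ∀ᵐ r ∂(volume : Measure ℝ), r ≠ ‖z‖ := by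
      rw [ae_iff]
      simp only [ne_eq, not_not, setOf_eq_eq_singleton]
      exact measure_singleton _
    exact h1.and (ae_restrict_of_ae h2)
  have hmeasf : AEStronglyMeasurable f (μr.prod μθ) := (meas_f z).aestronglyMeasurable
  have hslices : ∀ᵐ r ∂μr, Integrable (fun θ => f (r, θ)) μθ :=
    haegood.mono (fun r hr => slice_int hz1 hr.1.1 hr.1.2 hr.2)
  have hbnd : Integrable (fun r => ∫ θ, ‖f (r, θ)‖ ∂μθ) μr := by
    apply Integrable.mono' (g := fun _ => 2 * Real.pi * Cz z + 4 * Real.pi)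
      (integrableOn_const measure_Ioo_lt_top.ne)
      (hmeasf.norm.integral_prod_right')
    filter_upwards [haegood] with r hr
    exact int_bound hz1 hr.1.1 hr.1.2 hr.2
  have hint : Integrable f (μr.prod μθ) := (integrable_prod_iff hmeasf).2 ⟨hslices, hbnd⟩
  calc (∫ p in (Ioo (0:ℝ) 1) ×ˢ (Ioo (-Real.pi) Real.pi), f p)
      = ∫ p, f p ∂(μr.prod μθ) := by rw [← hrestrict]
    _ = ∫ r, (∫ θ, f (r, θ) ∂μθ) ∂μr := integral_prod f hint
    _ = ∫ r, (-4 * Real.pi) * (r * Real.log (max r (‖z‖))) ∂μr := by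
        apply MeasureTheory.integral_congr_ae
        filter_upwards [haegood] with r hr
        have h := inner_val hz1 hr.1.1 hr.1.2 hr.2
        rw [hμθ]
        rw [show (∫ θ, f (r, θ) ∂(volume.restrict (Ioo (-Real.pi) Real.pi)))
          = ∫ θ in Ioo (-Real.pi) Real.pi, f (r, θ) from rfl]
        rw [hf]
        rw [h]
        ring
    _ = (-4 * Real.pi) * ∫ r, r * Real.log (max r (‖z‖)) ∂μr :=
        MeasureTheory.integral_const_mul _ _
    _ = Real.pi * (1 - (‖z‖)^2) := by
        rw [hμr, show (∫ r, r * Real.log (max r (‖z‖))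
            ∂(volume.restrict (Ioo (0:ℝ) 1)))
          = ∫ r in Ioo (0:ℝ) 1, r * Real.log (max r (‖z‖)) from rfl,
          ← MeasureTheory.integral_Ioc_eq_integral_Ioo,
          ← intervalIntegral.integral_of_le zero_le_one, radial ha0 hz1]
        ring

/-- For every `z ∈ 𝔻`, `∫_𝔻 log|(1-ζ̄z)/(z-ζ)|² dA(ζ) = 1 - |z|²`. -/
theorem integral_log_eq (z : ℂ) (hz : z ∈ ball (0 : ℂ) 1) :
    (∫ ζ, Real.log (‖(1 - (starRingEnd ℂ) ζ * z) / (z - ζ)‖ ^ 2) ∂dA) =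
      1 - ‖z‖ ^ 2 := by
  have hπ := Real.pi_pos
  have hz1 : ‖z‖ < 1 := by
    simpa [Complex.dist_eq] using mem_ball.mp hz
  have hS : (∫ ζ in ball (0:ℂ) 1,
      Real.log (‖(1 - (starRingEnd ℂ) ζ * z) / (z - ζ)‖ ^ 2))
      = Real.pi * (1 - ‖z‖ ^ 2) := by
    have hGeq : ∀ ζ : ℂ, Real.log (‖(1 - (starRingEnd ℂ) ζ * z) / (z - ζ)‖ ^ 2)
        = Real.log ((‖1 - (starRingEnd ℂ) ζ * z‖)^2 / (‖z - ζ‖)^2) := by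
      intro ζ; rw [norm_div, div_pow]
    simp_rw [hGeq]
    rw [polar_step z, fubini_step z hz1]
  rw [show dA = ENNReal.ofReal (1 / Real.pi) • volume.restrict (ball (0 : ℂ) 1) from rfl,
    MeasureTheory.integral_smul_measure, ENNReal.toReal_ofReal (by positivity), hS, smul_eq_mul]
  field_simp
end
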